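/- arXiv:1205.6432 — 6 statements merged into one kernel-verified Lean document; each statement's English description precedes it below -/
import Mathlib

section
/- For every d ≥ 2 and k ≥ 3 there exists a Borel probability distribution D over ℝ^d × [k] such that Err*_D(L) = 0 while Err*_D(W^d_trees) > 0 and Err*_D(W^d_OvA) > 0; that is, the essential containment of W^d_trees and W^d_OvA in the multiclass SVM class L is strict. -/
open MeasureTheory
open scoped ENNReal

noncomputable def argmaxFin {k : ℕ} [NeZero k] (f : Fin k → ℝ) : Fin k :=
  (Finset.univ.filter fun i => ∀ j, f j ≤ f i).min' (by
    obtain ⟨i, -, hi⟩ := Finset.exists_max_image (Finset.univ : Finset (Fin k)) f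
      ⟨⟨0, Nat.pos_of_ne_zero (NeZero.ne k)⟩, Finset.mem_univ _⟩
    exact ⟨i, Finset.mem_filter.mpr ⟨Finset.mem_univ _, fun j => hi j (Finset.mem_univ _)⟩⟩)

def aug {d : ℕ} (x : Fin d → ℝ) : Fin (d + 1) → ℝ := Fin.snoc x 1

/-- halfspaces over ℝ^d, `true` ↔ +1, sign(0) = 1 -/
def halfspace (d : ℕ) : Set ((Fin d → ℝ) → Bool) :=
  { h | ∃ w : Fin (d + 1) → ℝ, h = fun x => decide (0 ≤ ∑ i, w i * aug x i) }

noncomputable def msvm (d k : ℕ) [NeZero k] : Set ((Fin d → ℝ) → Fin k) :=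
  { h | ∃ W : Fin k → Fin (d + 1) → ℝ,
      h = fun x => argmaxFin (fun i => ∑ j, W i j * aug x j) }

def NShatters {X Y : Type*} (H : Set (X → Y)) (S : Set X) : Prop :=
  ∃ f₁ f₂ : X → Y, (∀ x ∈ S, f₁ x ≠ f₂ x) ∧
    ∀ T ⊆ S, ∃ g ∈ H, (∀ x ∈ T, g x = f₁ x) ∧ ∀ x ∈ S \ T, g x = f₂ x

def GShatters {X Y : Type*} (H : Set (X → Y)) (S : Set X) : Prop :=
  ∃ f : X → Y, ∀ T ⊆ S, ∃ g ∈ H, (∀ x ∈ T, g x = f x) ∧ ∀ x ∈ S \ T, g x ≠ f x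

def VCDimLE {X : Type*} (H : Set (X → Bool)) (d : ℕ) : Prop :=
  ∀ S : Finset X, (∀ b : X → Bool, ∃ h ∈ H, ∀ x ∈ S, h x = b x) → S.card ≤ d

inductive LTree (k : ℕ) : Type where
  | leaf : Fin k → LTree k
  | node : LTree k → LTree k → LTree k

def LTree.labels {k : ℕ} : LTree k → List (Fin k)
  | .leaf i => [i]
  | .node l r => l.labels ++ r.labels

/-- `T` is a tree for `k` classes: its leaf labels form a bijection with `[k]`. -/
def LTree.IsTreeFor {k : ℕ} (T : LTree k) : Prop := T.labels.Perm (List.finRange k)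

def treeClass {X : Type*} {k : ℕ} (H : Set (X → Bool)) : LTree k → Set (X → Fin k)
  | .leaf i => {fun _ => i}
  | .node l r => { f | ∃ c ∈ H, ∃ fl ∈ treeClass H l, ∃ fr ∈ treeClass H r,
      f = fun x => if c x then fr x else fl x }

def treesClass {X : Type*} (H : Set (X → Bool)) (k : ℕ) : Set (X → Fin k) :=
  ⋃ T ∈ { T : LTree k | T.IsTreeFor }, treeClass H T

noncomputable def decode {k : ℕ} [NeZero k] {J : Type*} [Fintype J]
    (M : Fin k → J → ℝ) (u : J → Bool) : Fin k :=
  argmaxFin (fun i => ∑ j, M i j * (if u j then (1 : ℝ) else -1))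

noncomputable def ecocClass {X : Type*} {k : ℕ} [NeZero k] {J : Type*} [Fintype J]
    (H : Set (X → Bool)) (M : Fin k → J → ℝ) : Set (X → Fin k) :=
  { g | ∃ h : J → X → Bool, (∀ j, h j ∈ H) ∧ g = fun x => decode M (fun j => h j x) }

def ovaCode (k : ℕ) : Fin k → Fin k → ℝ := fun i j => if i = j then 1 else -1

def apCode (k : ℕ) : Fin k → { p : Fin k × Fin k // p.1 < p.2 } → ℝ :=
  fun i p => if i = p.1.1 then -1 else if i = p.1.2 then 1 else 0

noncomputable def errStar {X : Type*} [MeasurableSpace X] {k : ℕ}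
    (D : Measure (X × Fin k)) (H : Set (X → Fin k)) : ℝ≥0∞ :=
  ⨅ h ∈ H, D { p | h p.1 ≠ p.2 }

noncomputable def errStarBin {X : Type*} [MeasurableSpace X]
    (Q : Measure (X × Bool)) (H : Set (X → Bool)) : ℝ≥0∞ :=
  ⨅ h ∈ H, Q { p | h p.1 ≠ p.2 }

inductive PTree : Type where
  | leaf : PTree
  | node : PTree → PTree → PTree

def PTree.nLeaves : PTree → ℕ
  | .leaf => 1
  | .node l r => l.nLeaves + r.nLeaves

def PTree.leftLeaves : PTree → ℕ
  | .leaf => 0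
  | .node l _ => l.nLeaves

def PTree.rightLeaves : PTree → ℕ
  | .leaf => 0
  | .node _ r => r.nLeaves

def PTree.labelAux {k : ℕ} (f : ℕ → Fin k) : PTree → ℕ → LTree k
  | .leaf, n => .leaf (f n)
  | .node l r, n => .node (PTree.labelAux f l n) (PTree.labelAux f r (n + l.nLeaves))


namespace S9

def PX (i : Fin 10) : ℝ × ℝ :=
  if i.val = 0 then (15,14) else if i.val = 1 then (30,28) else if i.val = 2 then (6,-10)
  else if i.val = 3 then (14,15) else if i.val = 4 then (28,30) else if i.val = 5 then (-10,6)
  else if i.val = 6 then (-5,2) else if i.val = 7 then (2,-5) else if i.val = 8 then (-62,30)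
  else (30,-62)

def PLn (i : Fin 10) : ℕ :=
  if i.val ≤ 2 then 0 else if i.val ≤ 5 then 1 else 2

lemma PLn_lt (i : Fin 10) : PLn i < 3 := by
  unfold PLn; split_ifs <;> omega

def lab (k : ℕ) (hk : 3 ≤ k) (i : Fin 10) : Fin k := ⟨PLn i, lt_of_lt_of_le (PLn_lt i) hk⟩

def emb (d : ℕ) (p : ℝ × ℝ) : Fin d → ℝ :=
  fun j => if (j : ℕ) = 0 then p.1 else if (j : ℕ) = 1 then p.2 else 0

def vl {d : ℕ} (hd : 2 ≤ d) (w : Fin (d + 1) → ℝ) (p : ℝ × ℝ) : ℝ :=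
  w ⟨0, by omega⟩ * p.1 + w ⟨1, by omega⟩ * p.2 + w (Fin.last d)

lemma sum_aug {d : ℕ} (hd : 2 ≤ d) (w : Fin (d + 1) → ℝ) (p : ℝ × ℝ) :
    ∑ i, w i * aug (emb d p) i = vl hd w p := by
  have key : ∀ i : Fin (d + 1), w i * aug (emb d p) i =
      (if i = (⟨0, by omega⟩ : Fin (d+1)) then w i * p.1 else 0) +
      ((if i = (⟨1, by omega⟩ : Fin (d+1)) then w i * p.2 else 0) +
       (if i = Fin.last d then w i else 0)) := by
    intro i
    induction i using Fin.lastCases with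
    | last =>
        rw [aug, Fin.snoc_last]
        rw [if_neg (by simp [Fin.ext_iff]; omega), if_neg (by simp [Fin.ext_iff]; omega),
          if_pos rfl]
        ring
    | cast j =>
        rw [aug, Fin.snoc_castSucc]
        have hjle : (j : ℕ) < d := j.isLt
        by_cases hj0 : (j : ℕ) = 0
        · rw [if_pos (by simp [Fin.ext_iff, hj0]), if_neg (by simp [Fin.ext_iff, hj0]),
            if_neg (by simp [Fin.ext_iff]; omega), emb, if_pos hj0]
          ring
        · by_cases hj1 : (j : ℕ) = 1
          · rw [if_neg (by simp [Fin.ext_iff, hj1]), if_pos (by simp [Fin.ext_iff, hj1]),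
              if_neg (by simp [Fin.ext_iff]; omega), emb, if_neg hj0, if_pos hj1]
            ring
          · rw [if_neg (by simp [Fin.ext_iff]; omega), if_neg (by simp [Fin.ext_iff]; omega),
              if_neg (by simp [Fin.ext_iff]; omega), emb, if_neg hj0, if_neg hj1]
            ring
  rw [Finset.sum_congr rfl fun i _ => key i, Finset.sum_add_distrib, Finset.sum_add_distrib,
    Finset.sum_ite_eq' Finset.univ _ (fun i => w i * p.1),
    Finset.sum_ite_eq' Finset.univ _ (fun i => w i * p.2),
    Finset.sum_ite_eq' Finset.univ _ (fun i => w i)]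
  simp only [Finset.mem_univ, if_pos]
  rw [vl]; ring

lemma halfspace_eval {d : ℕ} (hd : 2 ≤ d) {c : (Fin d → ℝ) → Bool} (hc : c ∈ halfspace d) :
    ∃ w : Fin (d+1) → ℝ, ∀ p : ℝ × ℝ, c (emb d p) = decide (0 ≤ vl hd w p) := by
  obtain ⟨w, rfl⟩ := hc
  refine ⟨w, fun p => ?_⟩
  show decide (0 ≤ ∑ i, w i * aug (emb d p) i) = _
  rw [sum_aug hd]

lemma argmaxFin_spec {k : ℕ} [NeZero k] (f : Fin k → ℝ) : ∀ j, f j ≤ f (argmaxFin f) := by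
  have hmem : argmaxFin f ∈ Finset.univ.filter fun t => ∀ j, f j ≤ f t :=
    Finset.min'_mem _ _
  exact (Finset.mem_filter.mp hmem).2

lemma argmaxFin_le {k : ℕ} [NeZero k] (f : Fin k → ℝ) (i : Fin k) (hi : ∀ j, f j ≤ f i) :
    argmaxFin f ≤ i :=
  Finset.min'_le _ _ (Finset.mem_filter.mpr ⟨Finset.mem_univ _, hi⟩)

lemma argmaxFin_eq {k : ℕ} [NeZero k] (f : Fin k → ℝ) (i : Fin k)
    (h : ∀ j, j ≠ i → f j < f i) : argmaxFin f = i := by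
  by_contra hne
  exact absurd (argmaxFin_spec f i) (not_le.mpr (h _ hne))

lemma ova_score {k : ℕ} [NeZero k] (u : Fin k → Bool) (i : Fin k) :
    ∑ j, ovaCode k i j * (if u j then (1:ℝ) else -1)
      = 2 * (if u i then (1:ℝ) else -1) - ∑ j, (if u j then (1:ℝ) else -1) := by
  have key : ∀ j : Fin k, ovaCode k i j * (if u j then (1:ℝ) else -1)
      = 2 * (if j = i then (if u j then (1:ℝ) else -1) else 0)
        - (if u j then (1:ℝ) else -1) := by
    intro j
    unfold ovaCode
    by_cases h : j = i
    · rw [if_pos h.symm, if_pos h]; ring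
    · rw [if_neg (fun hh => h hh.symm), if_neg h]; ring
  rw [Finset.sum_congr rfl fun j _ => key j, Finset.sum_sub_distrib, ← Finset.mul_sum,
    Finset.sum_ite_eq' Finset.univ i (fun j => if u j then (1:ℝ) else -1)]
  simp

lemma decode_ova_le {k : ℕ} [NeZero k] (u : Fin k → Bool) (i : Fin k) (hi : u i = true) :
    decode (ovaCode k) u ≤ i := by
  apply argmaxFin_le
  intro j
  rw [ova_score, ova_score, hi, if_pos rfl]
  have : (if u j then (1:ℝ) else -1) ≤ 1 := by split <;> norm_num
  linarith

lemma decode_ova_self {k : ℕ} [NeZero k] (u : Fin k → Bool) (i : Fin k) (hi : u i = true) :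
    u (decode (ovaCode k) u) = true := by
  have hsp := argmaxFin_spec (fun i => ∑ j, ovaCode k i j * (if u j then (1:ℝ) else -1)) i
  rw [ova_score, ova_score, hi, if_pos rfl] at hsp
  by_contra hdec
  rw [Bool.not_eq_true] at hdec
  rw [show decode (ovaCode k) u
    = argmaxFin (fun i => ∑ j, ovaCode k i j * (if u j then (1:ℝ) else -1)) from rfl] at hdec
  rw [hdec] at hsp
  norm_num at hsp

lemma decode_ova_bot {k : ℕ} [NeZero k] (u : Fin k → Bool) (h : ∀ i, u i = false) :
    decode (ovaCode k) u = ⟨0, Nat.pos_of_ne_zero (NeZero.ne k)⟩ := by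
  apply le_antisymm
  · apply argmaxFin_le
    intro j
    rw [ova_score, ova_score, h, h]
  · exact Fin.mk_le_of_le_val (Nat.zero_le _)

/-! ### the multiclass linear predictor -/

def Wm (d k : ℕ) : Fin k → Fin (d+1) → ℝ := fun i j =>
  if (i : ℕ) = 0 then (if (j : ℕ) = 0 then 1 else 0)
  else if (i : ℕ) = 1 then (if (j : ℕ) = 1 then 1 else 0)
  else if (i : ℕ) = 2 then (if (j : ℕ) = 0 then -1 else if (j : ℕ) = 1 then -1 else 0)
  else 0

lemma Wm_vals {d k : ℕ} (hd : 2 ≤ d) (i : Fin k) :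
    Wm d k i ⟨0, by omega⟩ = (if (i:ℕ) = 0 then 1 else if (i:ℕ) = 2 then -1 else 0)
    ∧ Wm d k i ⟨1, by omega⟩ = (if (i:ℕ) = 1 then 1 else if (i:ℕ) = 2 then -1 else 0)
    ∧ Wm d k i (Fin.last d) = 0 := by
  have hL : ((Fin.last d) : ℕ) = d := rfl
  unfold Wm
  simp only [hL]
  norm_num
  refine ⟨?_, ?_, ?_⟩ <;> split_ifs <;> first | rfl | omega | (exfalso; omega) | norm_num

lemma score_eq {d k : ℕ} (hd : 2 ≤ d) (i : Fin k) (p : ℝ × ℝ) :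
    ∑ j, Wm d k i j * aug (emb d p) j =
      if (i : ℕ) = 0 then p.1 else if (i : ℕ) = 1 then p.2
      else if (i : ℕ) = 2 then -p.1 - p.2 else 0 := by
  obtain ⟨h0, h1, hL⟩ := Wm_vals (d := d) (k := k) hd i
  rw [sum_aug hd, vl, h0, h1, hL]
  split_ifs <;> first | omega | (exfalso; omega) | ring

lemma msvm_correct {d k : ℕ} [NeZero k] (hd : 2 ≤ d) (hk : 3 ≤ k) (i : Fin 10) :
    argmaxFin (fun c : Fin k => ∑ j, Wm d k c j * aug (emb d (PX i)) j) = lab k hk i := by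
  apply argmaxFin_eq
  intro j hj
  have hjv : (j : ℕ) ≠ PLn i := by
    intro h
    exact hj (Fin.ext (by simpa [lab] using h))
  simp only [score_eq hd]
  have hlv : ((lab k hk i : Fin k) : ℕ) = PLn i := rfl
  rw [hlv]
  rcases i with ⟨iv, hi⟩
  interval_cases iv <;>
    norm_num [PX, PLn] at hjv ⊢ <;>
    split_ifs <;> first | (exfalso; omega) | norm_num

/-! ### labels of tree classifiers -/

lemma treeClass_mem_labels {X : Type*} {k : ℕ} (H : Set (X → Bool)) :
    ∀ T : LTree k, ∀ g ∈ treeClass H T, ∀ x, g x ∈ T.labels := by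
  intro T
  induction T with
  | leaf i =>
      intro g hg x
      simp only [treeClass, Set.mem_singleton_iff] at hg
      subst hg
      simp [LTree.labels]
  | node l r ihl ihr =>
      intro g hg x
      simp only [treeClass, Set.mem_setOf_eq] at hg
      obtain ⟨c, hc, fl, hfl, fr, hfr, rfl⟩ := hg
      simp only [LTree.labels, List.mem_append]
      by_cases hcx : c x
      · simp only [hcx, if_true]
        exact Or.inr (ihr fr hfr x)
      · simp only [hcx, if_false, Bool.false_eq_true]
        exact Or.inl (ihl fl hfl x)

/-! ### the measure -/

noncomputable def atom (d k : ℕ) (hk : 3 ≤ k) (i : Fin 10) : (Fin d → ℝ) × Fin k :=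
  (emb d (PX i), lab k hk i)

noncomputable def DD (d k : ℕ) (hk : 3 ≤ k) : Measure ((Fin d → ℝ) × Fin k) :=
  (10 : ℝ≥0∞)⁻¹ • ∑ i : Fin 10, Measure.dirac (atom d k hk i)

lemma DD_apply (d k : ℕ) (hk : 3 ≤ k) (s : Set ((Fin d → ℝ) × Fin k)) :
    DD d k hk s = (10 : ℝ≥0∞)⁻¹ * ∑ i : Fin 10, Measure.dirac (atom d k hk i) s := by
  rw [DD, Measure.smul_apply, smul_eq_mul, Measure.coe_finset_sum, Finset.sum_apply]

lemma DD_prob (d k : ℕ) (hk : 3 ≤ k) : IsProbabilityMeasure (DD d k hk) := by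
  constructor
  rw [DD_apply]
  simp only [measure_univ, Finset.sum_const, Finset.card_univ, Fintype.card_fin, nsmul_eq_mul,
    mul_one]
  have hc : ((10:ℕ):ℝ≥0∞) = 10 := by norm_num
  rw [hc, ENNReal.inv_mul_cancel (by norm_num) (by norm_num)]

lemma dirac_not_mem {α : Type*} [MeasurableSpace α] [MeasurableSingletonClass α] {a : α}
    {s : Set α} (h : a ∉ s) : Measure.dirac a s = 0 := by
  have hsub : s ⊆ ({a} : Set α)ᶜ := fun x hx hxa => h (hxa ▸ hx)
  refine measure_mono_null hsub ?_
  rw [Measure.dirac_apply' _ (measurableSet_singleton a).compl]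
  simp

lemma err_msvm (d k : ℕ) [NeZero k] (hd : 2 ≤ d) (hk : 3 ≤ k) :
    errStar (DD d k hk) (msvm d k) = 0 := by
  apply le_antisymm _ zero_le
  have hg : (fun x => argmaxFin fun c : Fin k => ∑ j, Wm d k c j * aug x j) ∈ msvm d k :=
    ⟨Wm d k, rfl⟩
  refine le_trans (iInf₂_le _ hg) (le_of_eq ?_)
  rw [DD_apply]
  have hz : ∀ i : Fin 10, Measure.dirac (atom d k hk i)
      {p : (Fin d → ℝ) × Fin k |
        (fun x => argmaxFin fun c : Fin k => ∑ j, Wm d k c j * aug x j) p.1 ≠ p.2} = 0 := by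
    intro i
    apply dirac_not_mem
    simp only [Set.mem_setOf_eq, atom, not_not]
    exact msvm_correct hd hk i
  rw [Finset.sum_congr rfl fun i _ => hz i]
  simp

lemma err_lower (d k : ℕ) [NeZero k] (hd : 2 ≤ d) (hk : 3 ≤ k)
    {H : Set ((Fin d → ℝ) → Fin k)}
    (hH : ∀ g ∈ H, ∃ i : Fin 10, g (emb d (PX i)) ≠ lab k hk i) :
    0 < errStar (DD d k hk) H := by
  have h10 : (0:ℝ≥0∞) < (10:ℝ≥0∞)⁻¹ := by simp
  refine lt_of_lt_of_le h10 (le_iInf₂ fun g hg => ?_)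
  obtain ⟨i, hi⟩ := hH g hg
  have hmem : atom d k hk i ∈ {p : (Fin d → ℝ) × Fin k | g p.1 ≠ p.2} := hi
  have h1 : (1:ℝ≥0∞) ≤ ∑ j : Fin 10,
      Measure.dirac (atom d k hk j) {p : (Fin d → ℝ) × Fin k | g p.1 ≠ p.2} := by
    calc (1:ℝ≥0∞) = Measure.dirac (atom d k hk i) {p : (Fin d → ℝ) × Fin k | g p.1 ≠ p.2} :=
          (Measure.dirac_apply_of_mem hmem).symm
      _ ≤ _ := Finset.single_le_sum
          (f := fun j : Fin 10 =>
            Measure.dirac (atom d k hk j) {p : (Fin d → ℝ) × Fin k | g p.1 ≠ p.2})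
          (fun _ _ => zero_le) (Finset.mem_univ i)
  rw [DD_apply]
  calc (10:ℝ≥0∞)⁻¹ = (10:ℝ≥0∞)⁻¹ * 1 := (mul_one _).symm
    _ ≤ _ := mul_le_mul_right h1 _

/-! ### trees err -/

lemma tree_err {d k : ℕ} [NeZero k] (hd : 2 ≤ d) (hk : 3 ≤ k) :
    ∀ T : LTree k, T.labels.Nodup →
    (⟨0, by omega⟩ : Fin k) ∈ T.labels → (⟨1, by omega⟩ : Fin k) ∈ T.labels →
    (⟨2, by omega⟩ : Fin k) ∈ T.labels →
    ∀ g ∈ treeClass (halfspace d) T, ¬ ∀ i : Fin 10, g (emb d (PX i)) = lab k hk i := by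
  intro T
  induction T with
  | leaf t =>
      intro hnd h0 h1 h2 g hg hcor
      simp only [LTree.labels, List.mem_singleton] at h0 h1
      have : (0 : ℕ) = 1 := congrArg Fin.val (h0.trans h1.symm)
      omega
  | node l r ihl ihr =>
      intro hnd h0 h1 h2 g hg hcor
      simp only [treeClass, Set.mem_setOf_eq] at hg
      obtain ⟨c, hc, fl, hfl, fr, hfr, rfl⟩ := hg
      obtain ⟨w, hw⟩ := halfspace_eval hd hc
      simp only [LTree.labels, List.mem_append] at h0 h1 h2
      have hndl : l.labels.Nodup := by
        rw [LTree.labels] at hnd; exact hnd.of_append_left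
      have hndr : r.labels.Nodup := by
        rw [LTree.labels] at hnd; exact hnd.of_append_right
      have hdisj : l.labels.Disjoint r.labels := by
        rw [LTree.labels] at hnd; exact List.disjoint_of_nodup_append hnd
      set e : Fin 10 → Bool := fun i => c (emb d (PX i)) with he
      have hcor' : ∀ i : Fin 10,
          (if e i then fr (emb d (PX i)) else fl (emb d (PX i))) = lab k hk i := fun i => hcor i
      have hR : ∀ i, e i = true → lab k hk i ∈ r.labels := by
        intro i hi
        have h := hcor' i
        rw [hi, if_pos rfl] at h
        exact h ▸ treeClass_mem_labels _ r fr hfr _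
      have hLm : ∀ i, e i = false → lab k hk i ∈ l.labels := by
        intro i hi
        have h := hcor' i
        rw [hi] at h
        simp only [Bool.false_eq_true, if_false] at h
        exact h ▸ treeClass_mem_labels _ l fl hfl _
      have hconst : ∀ i j : Fin 10, PLn i = PLn j → e i = e j := by
        intro i j hij
        have hlij : lab k hk i = lab k hk j := Fin.ext hij
        cases hei : e i <;> cases hej : e j
        · rfl
        · exact absurd (hR j hej) (fun hmr => hdisj (hlij ▸ hLm i hei) hmr)
        · exact absurd (hR i hei) (fun hmr => hdisj (hlij ▸ hLm j hej) hmr)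
        · rfl
      by_cases hall : ∀ i : Fin 10, e i = e ⟨0, by omega⟩
      · -- all points go to the same side
        have hlab0 : lab k hk ⟨0, by omega⟩ = (⟨0, by omega⟩ : Fin k) := Fin.ext (by norm_num [lab, PLn])
        have hlab1 : lab k hk ⟨3, by omega⟩ = (⟨1, by omega⟩ : Fin k) := Fin.ext (by norm_num [lab, PLn])
        have hlab2 : lab k hk ⟨6, by omega⟩ = (⟨2, by omega⟩ : Fin k) := Fin.ext (by norm_num [lab, PLn])
        cases h00 : e ⟨0, by omega⟩
        · refine ihl hndl ?_ ?_ ?_ fl hfl ?_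
          · exact hlab0 ▸ hLm ⟨0, by omega⟩ (by rw [hall ⟨0, by omega⟩, h00])
          · exact hlab1 ▸ hLm ⟨3, by omega⟩ (by rw [hall ⟨3, by omega⟩, h00])
          · exact hlab2 ▸ hLm ⟨6, by omega⟩ (by rw [hall ⟨6, by omega⟩, h00])
          · intro i
            have h := hcor' i
            rw [hall i, h00] at h
            simpa using h
        · refine ihr hndr ?_ ?_ ?_ fr hfr ?_
          · exact hlab0 ▸ hR ⟨0, by omega⟩ (by rw [hall ⟨0, by omega⟩, h00])
          · exact hlab1 ▸ hR ⟨3, by omega⟩ (by rw [hall ⟨3, by omega⟩, h00])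
          · exact hlab2 ▸ hR ⟨6, by omega⟩ (by rw [hall ⟨6, by omega⟩, h00])
          · intro i
            have h := hcor' i
            rw [hall i, h00] at h
            simpa using h
      · -- the halfspace separates the classes; derive numeric contradiction
        push_neg at hall
        obtain ⟨i0, hi0⟩ := hall
        have hVpos : ∀ i : Fin 10, e i = true → 0 ≤ vl hd w (PX i) := by
          intro i hi
          have hdec : decide (0 ≤ vl hd w (PX i)) = true := by rw [← hw (PX i)]; exact hi
          exact of_decide_eq_true hdec
        have hVneg : ∀ i : Fin 10, e i = false → vl hd w (PX i) < 0 := by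
          intro i hi
          have hdec : decide (0 ≤ vl hd w (PX i)) = false := by rw [← hw (PX i)]; exact hi
          exact lt_of_not_ge (of_decide_eq_false hdec)
        have hvl : ∀ i : Fin 10, vl hd w (PX i)
            = w ⟨0, by omega⟩ * (PX i).1 + w ⟨1, by omega⟩ * (PX i).2 + w (Fin.last d) := by
          intro i; rfl
        have E1 : e ⟨1, by omega⟩ = e ⟨0, by omega⟩ := hconst _ _ (by norm_num [PLn])
        have E2 : e ⟨2, by omega⟩ = e ⟨0, by omega⟩ := hconst _ _ (by norm_num [PLn])
        have E4 : e ⟨4, by omega⟩ = e ⟨3, by omega⟩ := hconst _ _ (by norm_num [PLn])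
        have E5 : e ⟨5, by omega⟩ = e ⟨3, by omega⟩ := hconst _ _ (by norm_num [PLn])
        have E7 : e ⟨7, by omega⟩ = e ⟨6, by omega⟩ := hconst _ _ (by norm_num [PLn])
        have E8 : e ⟨8, by omega⟩ = e ⟨6, by omega⟩ := hconst _ _ (by norm_num [PLn])
        have E9 : e ⟨9, by omega⟩ = e ⟨6, by omega⟩ := hconst _ _ (by norm_num [PLn])
        have hiE : e i0 = e ⟨0, by omega⟩ ∨ e i0 = e ⟨3, by omega⟩ ∨ e i0 = e ⟨6, by omega⟩ := by
          have h3 := PLn_lt i0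
          have : PLn i0 = 0 ∨ PLn i0 = 1 ∨ PLn i0 = 2 := by omega
          rcases this with h | h | h
          · exact Or.inl (hconst _ _ (by rw [h]; norm_num [PLn]))
          · exact Or.inr (Or.inl (hconst _ _ (by rw [h]; norm_num [PLn])))
          · exact Or.inr (Or.inr (hconst _ _ (by rw [h]; norm_num [PLn])))
        cases h00 : e ⟨0, by omega⟩ <;> cases h33 : e ⟨3, by omega⟩ <;> cases h66 : e ⟨6, by omega⟩
        · -- FFF : impossible, not all equal
          refine hi0 ?_
          rcases hiE with h | h | h
          exacts [h, h.trans (h33.trans h00.symm), h.trans (h66.trans h00.symm)]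
        · -- FFT : class 2 on true side, classes 0,1 on false side
          have A6 := hVpos ⟨6, by omega⟩ h66
          have A7 := hVpos ⟨7, by omega⟩ (E7.trans h66)
          have A2 := hVneg ⟨2, by omega⟩ (E2.trans h00)
          have A5 := hVneg ⟨5, by omega⟩ (E5.trans h33)
          have A1 := hVneg ⟨1, by omega⟩ (E1.trans h00)
          have A4 := hVneg ⟨4, by omega⟩ (E4.trans h33)
          rw [hvl] at A6 A7 A2 A5 A1 A4
          norm_num [PX] at A6 A7 A2 A5 A1 A4
          linarith
        · -- FTF : class 1 true, classes 0,2 false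
          have A3 := hVpos ⟨3, by omega⟩ h33
          have A4 := hVpos ⟨4, by omega⟩ (E4.trans h33)
          have A1 := hVneg ⟨1, by omega⟩ (E1.trans h00)
          have A8 := hVneg ⟨8, by omega⟩ (E8.trans h66)
          rw [hvl] at A3 A4 A1 A8
          norm_num [PX] at A3 A4 A1 A8
          linarith
        · -- FTT : class 0 false, classes 1,2 true
          have A0 := hVneg ⟨0, by omega⟩ h00
          have A1 := hVneg ⟨1, by omega⟩ (E1.trans h00)
          have A4 := hVpos ⟨4, by omega⟩ (E4.trans h33)
          have A9 := hVpos ⟨9, by omega⟩ (E9.trans h66)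
          rw [hvl] at A0 A1 A4 A9
          norm_num [PX] at A0 A1 A4 A9
          linarith
        · -- TFF : class 0 true, classes 1,2 false
          have A0 := hVpos ⟨0, by omega⟩ h00
          have A1 := hVpos ⟨1, by omega⟩ (E1.trans h00)
          have A4 := hVneg ⟨4, by omega⟩ (E4.trans h33)
          have A9 := hVneg ⟨9, by omega⟩ (E9.trans h66)
          rw [hvl] at A0 A1 A4 A9
          norm_num [PX] at A0 A1 A4 A9
          linarith
        · -- TFT : class 1 false, classes 0,2 true
          have A3 := hVneg ⟨3, by omega⟩ h33
          have A4 := hVneg ⟨4, by omega⟩ (E4.trans h33)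
          have A1 := hVpos ⟨1, by omega⟩ (E1.trans h00)
          have A8 := hVpos ⟨8, by omega⟩ (E8.trans h66)
          rw [hvl] at A3 A4 A1 A8
          norm_num [PX] at A3 A4 A1 A8
          linarith
        · -- TTF : class 2 false, classes 0,1 true
          have A6 := hVneg ⟨6, by omega⟩ h66
          have A7 := hVneg ⟨7, by omega⟩ (E7.trans h66)
          have A2 := hVpos ⟨2, by omega⟩ (E2.trans h00)
          have A5 := hVpos ⟨5, by omega⟩ (E5.trans h33)
          have A1 := hVpos ⟨1, by omega⟩ (E1.trans h00)
          have A4 := hVpos ⟨4, by omega⟩ (E4.trans h33)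
          rw [hvl] at A6 A7 A2 A5 A1 A4
          norm_num [PX] at A6 A7 A2 A5 A1 A4
          linarith
        · -- TTT : impossible
          refine hi0 ?_
          rcases hiE with h | h | h
          exacts [h, h.trans (h33.trans h00.symm), h.trans (h66.trans h00.symm)]

/-! ### OvA errs -/

lemma ova_err {d k : ℕ} [NeZero k] (hd : 2 ≤ d) (hk : 3 ≤ k) :
    ∀ g ∈ ecocClass (halfspace d) (ovaCode k),
      ¬ ∀ i : Fin 10, g (emb d (PX i)) = lab k hk i := by
  rintro g ⟨hs, hhs, rfl⟩ hcor
  have hcor' : ∀ i : Fin 10,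
      decode (ovaCode k) (fun j => hs j (emb d (PX i))) = lab k hk i := fun i => hcor i
  -- class 1 points : h₀ false, h₁ true
  have hcls1 : ∀ i : Fin 10, PLn i = 1 →
      hs ⟨0, by omega⟩ (emb d (PX i)) = false ∧ hs ⟨1, by omega⟩ (emb d (PX i)) = true := by
    intro i hP
    have hdec := hcor' i
    have hlv : (lab k hk i : ℕ) = 1 := hP
    constructor
    · by_contra h0t
      rw [Bool.not_eq_false] at h0t
      have hle := decode_ova_le (fun j => hs j (emb d (PX i))) ⟨0, by omega⟩ h0t
      rw [hdec] at hle
      have hv := Fin.le_def.mp hle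
      have hz : ((⟨0, by omega⟩ : Fin k) : ℕ) = 0 := rfl
      rw [hlv, hz] at hv
      omega
    · by_cases hallf : ∀ j : Fin k, hs j (emb d (PX i)) = false
      · have := decode_ova_bot (fun j => hs j (emb d (PX i))) hallf
        rw [hdec] at this
        have := congrArg Fin.val this
        simp only [hlv] at this
        omega
      · push_neg at hallf
        obtain ⟨j, hj⟩ := hallf
        have := decode_ova_self (fun j => hs j (emb d (PX i))) j (Bool.ne_false_iff.mp hj)
        rw [hdec] at this
        have hlab : lab k hk i = ⟨1, by omega⟩ := Fin.ext hP
        rw [hlab] at this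
        exact this
  -- class 2 points : h₀ false, h₁ false
  have hcls2 : ∀ i : Fin 10, PLn i = 2 →
      hs ⟨0, by omega⟩ (emb d (PX i)) = false ∧ hs ⟨1, by omega⟩ (emb d (PX i)) = false := by
    intro i hP
    have hdec := hcor' i
    have hlv : (lab k hk i : ℕ) = 2 := hP
    constructor
    · by_contra h0t
      rw [Bool.not_eq_false] at h0t
      have hle := decode_ova_le (fun j => hs j (emb d (PX i))) ⟨0, by omega⟩ h0t
      rw [hdec] at hle
      have hv := Fin.le_def.mp hle
      have hz : ((⟨0, by omega⟩ : Fin k) : ℕ) = 0 := rfl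
      rw [hlv, hz] at hv
      omega
    · by_contra h1t
      rw [Bool.not_eq_false] at h1t
      have hle := decode_ova_le (fun j => hs j (emb d (PX i))) ⟨1, by omega⟩ h1t
      rw [hdec] at hle
      have hv := Fin.le_def.mp hle
      have hz : ((⟨1, by omega⟩ : Fin k) : ℕ) = 1 := rfl
      rw [hlv, hz] at hv
      omega
  -- class 0 points : h₀ true, or h₀ and h₁ both false
  have hcls0 : ∀ i : Fin 10, PLn i = 0 →
      hs ⟨0, by omega⟩ (emb d (PX i)) = true ∨
      (hs ⟨0, by omega⟩ (emb d (PX i)) = false ∧ hs ⟨1, by omega⟩ (emb d (PX i)) = false) := by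
    intro i hP
    have hdec := hcor' i
    by_cases hallf : ∀ j : Fin k, hs j (emb d (PX i)) = false
    · exact Or.inr ⟨hallf _, hallf _⟩
    · left
      push_neg at hallf
      obtain ⟨j, hj⟩ := hallf
      have := decode_ova_self (fun j => hs j (emb d (PX i))) j (Bool.ne_false_iff.mp hj)
      rw [hdec] at this
      have hlab : lab k hk i = ⟨0, by omega⟩ := Fin.ext hP
      rw [hlab] at this
      exact this
  obtain ⟨w0, hw0⟩ := halfspace_eval hd (hhs ⟨0, by omega⟩)
  obtain ⟨w1, hw1⟩ := halfspace_eval hd (hhs ⟨1, by omega⟩)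
  have hV : ∀ (w : Fin (d+1) → ℝ) (i : Fin 10), vl hd w (PX i)
      = w ⟨0, by omega⟩ * (PX i).1 + w ⟨1, by omega⟩ * (PX i).2 + w (Fin.last d) :=
    fun w i => rfl
  have hpos0 : ∀ i : Fin 10, hs ⟨0, by omega⟩ (emb d (PX i)) = true → 0 ≤ vl hd w0 (PX i) := by
    intro i hi
    have hdec : decide (0 ≤ vl hd w0 (PX i)) = true := by rw [← hw0 (PX i)]; exact hi
    exact of_decide_eq_true hdec
  have hneg0 : ∀ i : Fin 10, hs ⟨0, by omega⟩ (emb d (PX i)) = false → vl hd w0 (PX i) < 0 := by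
    intro i hi
    have hdec : decide (0 ≤ vl hd w0 (PX i)) = false := by rw [← hw0 (PX i)]; exact hi
    exact lt_of_not_ge (of_decide_eq_false hdec)
  have hpos1 : ∀ i : Fin 10, hs ⟨1, by omega⟩ (emb d (PX i)) = true → 0 ≤ vl hd w1 (PX i) := by
    intro i hi
    have hdec : decide (0 ≤ vl hd w1 (PX i)) = true := by rw [← hw1 (PX i)]; exact hi
    exact of_decide_eq_true hdec
  have hneg1 : ∀ i : Fin 10, hs ⟨1, by omega⟩ (emb d (PX i)) = false → vl hd w1 (PX i) < 0 := by
    intro i hi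
    have hdec : decide (0 ≤ vl hd w1 (PX i)) = false := by rw [← hw1 (PX i)]; exact hi
    exact lt_of_not_ge (of_decide_eq_false hdec)
  -- h₁ values on class-1 points (nonneg) and on the class-2 point b₂ (neg)
  have B3 := hpos1 ⟨3, by omega⟩ (hcls1 ⟨3, by omega⟩ (by norm_num [PLn])).2
  have B4 := hpos1 ⟨4, by omega⟩ (hcls1 ⟨4, by omega⟩ (by norm_num [PLn])).2
  have B5 := hpos1 ⟨5, by omega⟩ (hcls1 ⟨5, by omega⟩ (by norm_num [PLn])).2
  have B8 := hneg1 ⟨8, by omega⟩ (hcls2 ⟨8, by omega⟩ (by norm_num [PLn])).2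
  rw [hV] at B3 B4 B5 B8
  norm_num [PX] at B3 B4 B5 B8
  rcases hcls0 ⟨0, by omega⟩ (by norm_num [PLn]) with h0T | ⟨h00F, h01F⟩
  · rcases hcls0 ⟨1, by omega⟩ (by norm_num [PLn]) with h1T | ⟨h10F, h11F⟩
    · -- both class-0 test points on the positive side of h₀
      have A0 := hpos0 ⟨0, by omega⟩ h0T
      have A1 := hpos0 ⟨1, by omega⟩ h1T
      have A4 := hneg0 ⟨4, by omega⟩ (hcls1 ⟨4, by omega⟩ (by norm_num [PLn])).1
      have A9 := hneg0 ⟨9, by omega⟩ (hcls2 ⟨9, by omega⟩ (by norm_num [PLn])).1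
      rw [hV] at A0 A1 A4 A9
      norm_num [PX] at A0 A1 A4 A9
      linarith
    · -- b₀ has h₁ negative
      have C1 := hneg1 ⟨1, by omega⟩ h11F
      rw [hV] at C1
      norm_num [PX] at C1
      linarith
  · -- a₀ has h₁ negative
    have C0 := hneg1 ⟨0, by omega⟩ h01F
    rw [hV] at C0
    norm_num [PX] at C0
    linarith

end S9

/-- For every d ≥ 2 and k ≥ 3 there exists a Borel probability distribution D over
ℝ^d × [k] such that Err*_D(L) = 0 while Err*_D(W^d_trees) > 0 and Err*_D(W^d_OvA) > 0: the
essential containments of W^d_trees and W^d_OvA in the multiclass SVM class L are strict. -/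
theorem stmt9 (d k : ℕ) [NeZero k] (hd : 2 ≤ d) (hk : 3 ≤ k) :
    ∃ D : Measure ((Fin d → ℝ) × Fin k), IsProbabilityMeasure D ∧
      errStar D (msvm d k) = 0 ∧
      0 < errStar D (treesClass (halfspace d) k) ∧
      0 < errStar D (ecocClass (halfspace d) (ovaCode k)) := by
  classical
  refine ⟨S9.DD d k hk, S9.DD_prob d k hk, S9.err_msvm d k hd hk, ?_, ?_⟩
  · apply S9.err_lower d k hd hk
    intro g hg
    by_contra hcon
    push_neg at hcon
    simp only [treesClass, Set.mem_iUnion, Set.mem_setOf_eq] at hg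
    obtain ⟨T, hTfor, hgT⟩ := hg
    have hnd : T.labels.Nodup := hTfor.nodup_iff.mpr (List.nodup_finRange k)
    refine S9.tree_err hd hk T hnd ?_ ?_ ?_ g hgT (fun i => ?_)
    · exact hTfor.mem_iff.mpr (List.mem_finRange _)
    · exact hTfor.mem_iff.mpr (List.mem_finRange _)
    · exact hTfor.mem_iff.mpr (List.mem_finRange _)
    · simpa using hcon i
  · apply S9.err_lower d k hd hk
    intro g hg
    by_contra hcon
    push_neg at hcon
    exact S9.ova_err hd hk g hg (fun i => by simpa using hcon i)
end

section
/- There exists a universal constant C > 0 such that the following holds for all integers d ≥ 2, k ≥ 3, d' ≥ 2: if ι : ℝ^d → ℝ^{d'} is any map and T is a tree for k classes such that the class W^{d'}_T ∘ ι = {h ∘ ι : h ∈ W^{d'}_T} essentially contains the multiclass SVM class L over ℝ^d (i.e., Err*_D(W^{d'}_T ∘ ι) ≤ Err*_D(L) for every probability distribution D over ℝ^d × [k]), then d·(k−1) ≤ C·log₂(k)·d'·log(log₂(k)·d'). In particular, d' = Ω̃(d·k). -/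
open MeasureTheory
open scoped ENNReal

section Aux

open Finset

lemma argmaxFin_eq_of_lt {k : ℕ} [NeZero k] (f : Fin k → ℝ) (i₀ : Fin k)
    (h : ∀ j, j ≠ i₀ → f j < f i₀) : argmaxFin f = i₀ := by
  have hfil : (Finset.univ.filter fun i => ∀ j, f j ≤ f i) = {i₀} := by
    ext i
    simp only [Finset.mem_filter, Finset.mem_univ, true_and, Finset.mem_singleton]
    constructor
    · intro hi
      by_contra hne
      exact absurd (hi i₀) (not_le.mpr (h i hne))
    · rintro rfl
      intro j
      rcases eq_or_ne j i with rfl | hj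
      · exact le_refl _
      · exact (h j hj).le
  unfold argmaxFin
  simp only [hfil]
  exact Finset.min'_singleton i₀

lemma aug_apply {d : ℕ} (x : Fin d → ℝ) (t : Fin (d + 1)) :
    aug x t = if h : (t : ℕ) < d then x ⟨t, h⟩ else 1 := by
  unfold aug Fin.snoc
  split <;> simp_all [Fin.castLT]

end Aux
section VC

open Finset

lemma halfspace_vc {d' : ℕ} {X : Type*} [DecidableEq X] (pts : X → (Fin d' → ℝ)) (S : Finset X)
    (hsh : ∀ TA ⊆ S, ∃ hh ∈ halfspace d', ∀ x ∈ S, hh (pts x) = decide (x ∈ TA)) :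
    S.card ≤ d' + 1 := by
  by_contra hcard
  push_neg at hcard
  set v : X → Fin (d' + 1) → ℝ := fun x => aug (pts x) with hv
  have hnli : ¬ LinearIndependent ℝ (fun x : ↥S => v x) := by
    intro hli
    have h1 : Fintype.card ↥S ≤ Module.finrank ℝ (Fin (d' + 1) → ℝ) :=
      hli.fintype_card_le_finrank
    rw [Module.finrank_pi, Fintype.card_coe] at h1
    simp only [Fintype.card_fin] at h1
    omega
  rw [Fintype.not_linearIndependent_iff] at hnli
  obtain ⟨g, hsum, x₀, hx₀⟩ := hnli
  obtain ⟨c, hcsum, hcx₀⟩ :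
      ∃ c : ↥S → ℝ, (∑ x : ↥S, c x • v x.val = 0) ∧ 0 < c x₀ := by
    rcases lt_or_gt_of_ne hx₀ with hneg | hpos
    · refine ⟨fun x => - g x, ?_, ?_⟩
      · have : ∑ x : ↥S, (fun x => - g x) x • v x.val = - ∑ x : ↥S, g x • v x.val := by
          rw [← Finset.sum_neg_distrib]
          exact Finset.sum_congr rfl fun x _ => by simp [neg_smul]
        rw [this, hsum, neg_zero]
      · show (0:ℝ) < - g x₀
        linarith
    · exact ⟨g, hsum, hpos⟩
  classical
  set cc : X → ℝ := fun x => if h : x ∈ S then c ⟨x, h⟩ else 0 with hcc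
  have hccval : ∀ x : ↥S, cc x.val = c x := by
    intro x
    simp only [hcc, dif_pos x.2]
  set TA : Finset X := S.filter (fun x => cc x ≤ 0) with hTA
  obtain ⟨hh, hhmem, hhreal⟩ := hsh TA (Finset.filter_subset _ _)
  obtain ⟨w, rfl⟩ := hhmem
  have hkey : ∀ x ∈ S, (0 ≤ ∑ i, w i * v x i) ↔ cc x ≤ 0 := by
    intro x hx
    have := hhreal x hx
    simp only [decide_eq_decide] at this
    rw [this, hTA, Finset.mem_filter]
    exact ⟨fun h => h.2, fun h => ⟨hx, h⟩⟩
  have hzero : ∑ x : ↥S, cc x.val * (∑ i, w i * v x.val i) = 0 := by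
    calc ∑ x : ↥S, cc x.val * ∑ i, w i * v x.val i
        = ∑ x : ↥S, ∑ i, w i * (cc x.val * v x.val i) := by
          refine Finset.sum_congr rfl fun x _ => ?_
          rw [Finset.mul_sum]; exact Finset.sum_congr rfl fun i _ => by ring
      _ = ∑ i, ∑ x : ↥S, w i * (cc x.val * v x.val i) := Finset.sum_comm
      _ = ∑ i, w i * ∑ x : ↥S, cc x.val * v x.val i := by
          exact Finset.sum_congr rfl fun i _ => (Finset.mul_sum _ _ _).symm
      _ = 0 := by
          have hz : ∀ i, ∑ x : ↥S, cc x.val * v x.val i = 0 := by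
            intro i
            have := congrFun hcsum i
            simp only [Finset.sum_apply, Pi.smul_apply, smul_eq_mul, Pi.zero_apply] at this
            rw [← this]
            exact Finset.sum_congr rfl fun x _ => by rw [hccval]
          exact Finset.sum_eq_zero fun i _ => by rw [hz i, mul_zero]
  have hneg : ∑ x : ↥S, cc x.val * (∑ i, w i * v x.val i) < 0 := by
    have h0 : (0:ℝ) = ∑ _x : ↥S, (0:ℝ) := by simp
    rw [h0]
    refine Finset.sum_lt_sum (fun x _ => ?_) ⟨x₀, Finset.mem_univ _, ?_⟩
    · rcases le_or_gt (cc x.val) 0 with hle | hgt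
      · have hin : 0 ≤ ∑ i, w i * v x.val i := (hkey x.val x.2).mpr hle
        exact mul_nonpos_of_nonpos_of_nonneg hle hin
      · have hin : ¬ (0 ≤ ∑ i, w i * v x.val i) := by
          rw [hkey x.val x.2]; linarith
        push_neg at hin
        exact (mul_neg_of_pos_of_neg hgt hin).le
    · have hgt : 0 < cc x₀.val := by rw [hccval]; exact hcx₀
      have hin : ¬ (0 ≤ ∑ i, w i * v x₀.val i) := by
        rw [hkey x₀.val x₀.2]; linarith
      push_neg at hin
      exact mul_neg_of_pos_of_neg hgt hin
  exact absurd hzero (ne_of_lt hneg)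

end VC
section Tree

open Finset

lemma treeClass_mem_labels {X : Type*} {k : ℕ} {H : Set (X → Bool)} :
    ∀ (T : LTree k), ∀ g ∈ treeClass H T, ∀ x, g x ∈ T.labels := by
  intro T
  induction T with
  | leaf i =>
    intro g hg x
    rw [Set.mem_singleton_iff.mp hg]
    simp [LTree.labels]
  | node l r ihl ihr =>
    rintro g ⟨c, _, fl, hfl, fr, hfr, rfl⟩ x
    simp only [LTree.labels, List.mem_append]
    by_cases hc : c x
    · right; simp only [hc, if_true]; exact ihr fr hfr x
    · left; simp only [hc]; simpa using ihl fl hfl x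

lemma tree_capacity {k d' : ℕ} :
    ∀ (T : LTree k), T.labels.Nodup →
    ∃ (a : Fin k) (p : ℕ), a ∈ T.labels ∧ 2 ^ p ≤ T.labels.length ∧
      ∀ (X : Type) (_ : Fintype X) (_ : DecidableEq X)
        (pts : X → (Fin d' → ℝ)) (f2 : X → Fin k),
        (∀ x, f2 x ≠ a) →
        (∀ Tset : Finset X, ∃ g ∈ treeClass (halfspace d') T,
            ∀ x, g (pts x) = if x ∈ Tset then a else f2 x) →
        Fintype.card X ≤ p * (d' + 1) := by
  intro T
  induction T with
  | leaf i =>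
    intro _
    refine ⟨i, 0, by simp [LTree.labels], by simp [LTree.labels], ?_⟩
    intro X _ _ pts f2 hf2 hreal
    obtain ⟨g, hg, hgval⟩ := hreal ∅
    have hempty : IsEmpty X := by
      constructor
      intro x
      have := hgval x
      simp only [Finset.notMem_empty, if_false] at this
      rw [Set.mem_singleton_iff.mp hg] at this
      exact hf2 x this.symm
    simp [Fintype.card_eq_zero]
  | node l r ihl ihr =>
    intro hnd
    simp only [LTree.labels] at hnd
    rw [List.nodup_append] at hnd
    obtain ⟨hndl, hndr, hdisj⟩ := hnd
    obtain ⟨al, pl, hal, hpl, hcapl⟩ := ihl hndl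
    obtain ⟨ar, pr, har, hpr, hcapr⟩ := ihr hndr
    rcases le_total (2 ^ pl) (2 ^ pr) with hside | hside
    · -- go left
      refine ⟨al, pl + 1, by simp [LTree.labels, hal], ?_, ?_⟩
      · simp only [LTree.labels, List.length_append]
        calc 2 ^ (pl + 1) = 2 ^ pl + 2 ^ pl := by ring
          _ ≤ l.labels.length + r.labels.length := Nat.add_le_add hpl (le_trans hside hpr)
      · intro X _ _ pts f2 hf2 hreal
        classical
        have hext : ∀ Tset : Finset X, ∃ c ∈ halfspace d', ∃ fl ∈ treeClass (halfspace d') l,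
            ∃ fr ∈ treeClass (halfspace d') r,
            ∀ x, (if c (pts x) then fr (pts x) else fl (pts x)) = if x ∈ Tset then al else f2 x := by
          intro Tset
          obtain ⟨g, hg, hgval⟩ := hreal Tset
          obtain ⟨c, hc, fl, hfl, fr, hfr, rfl⟩ := hg
          exact ⟨c, hc, fl, hfl, fr, hfr, fun x => hgval x⟩
        set B : Finset X := Finset.univ.filter (fun x => f2 x ∈ l.labels) with hB
        set A : Finset X := Finset.univ.filter (fun x => f2 x ∉ l.labels) with hA
        have hAcard : A.card ≤ d' + 1 := by
          apply halfspace_vc pts A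
          intro TA hTA
          obtain ⟨c, hc, fl, hfl, fr, hfr, hval⟩ := hext (A \ TA)
          refine ⟨c, hc, ?_⟩
          intro x hxA
          have hx := hval x
          by_cases hxT : x ∈ TA
          · have hnot : x ∉ A \ TA := by simp [hxT]
            rw [if_neg hnot] at hx
            have hcx : c (pts x) = true := by
              by_contra hcf
              rw [Bool.not_eq_true] at hcf
              rw [hcf] at hx
              simp only [Bool.false_eq_true, if_false] at hx
              have h1 : fl (pts x) ∈ l.labels := treeClass_mem_labels l fl hfl (pts x)
              rw [hx] at h1
              exact (Finset.mem_filter.mp hxA).2 h1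
            rw [hcx]
            exact (decide_eq_true hxT).symm
          · have hin : x ∈ A \ TA := Finset.mem_sdiff.mpr ⟨hxA, hxT⟩
            rw [if_pos hin] at hx
            have hcx : c (pts x) = false := by
              by_contra hct
              rw [Bool.not_eq_false] at hct
              rw [hct] at hx
              simp only [if_true] at hx
              have h1 : fr (pts x) ∈ r.labels := treeClass_mem_labels r fr hfr (pts x)
              rw [hx] at h1
              exact hdisj _ hal _ h1 rfl
            rw [hcx]
            exact (decide_eq_false hxT).symm
        have hBcard : B.card ≤ pl * (d' + 1) := by
          have hkey := hcapl ↥B (inferInstance) (inferInstance)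
            (fun x => pts x.val) (fun x => f2 x.val) (fun x => hf2 x.val) ?_
          · rwa [Fintype.card_coe] at hkey
          · intro Tset'
            obtain ⟨c, hc, fl, hfl, fr, hfr, hval⟩ := hext (Tset'.image Subtype.val)
            refine ⟨fl, hfl, ?_⟩
            intro x'
            have hx := hval x'.val
            have hmem : (x'.val ∈ Tset'.image Subtype.val) ↔ (x' ∈ Tset') :=
              Subtype.val_injective.mem_finset_image
            have hcx : c (pts x'.val) = false := by
              by_contra hct
              rw [Bool.not_eq_false] at hct
              rw [hct] at hx
              simp only [if_true] at hx
              have h1 : fr (pts x'.val) ∈ r.labels := treeClass_mem_labels r fr hfr _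
              rw [hx] at h1
              by_cases h : x'.val ∈ Tset'.image Subtype.val
              · rw [if_pos h] at h1; exact hdisj _ hal _ h1 rfl
              · rw [if_neg h] at h1; exact hdisj _ (Finset.mem_filter.mp x'.2).2 _ h1 rfl
            rw [hcx] at hx
            simp only [Bool.false_eq_true, if_false] at hx
            show fl (pts x'.val) = _
            rw [hx]
            by_cases h : x' ∈ Tset'
            · rw [if_pos (hmem.mpr h), if_pos h]
            · rw [if_neg (fun hh => h (hmem.mp hh)), if_neg h]
        have hsplit : B.card + A.card = Fintype.card X := by
          rw [hB, hA, ← Finset.card_univ]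
          exact Finset.card_filter_add_card_filter_not _
        calc Fintype.card X = B.card + A.card := hsplit.symm
          _ ≤ pl * (d' + 1) + (d' + 1) := Nat.add_le_add hBcard hAcard
          _ = (pl + 1) * (d' + 1) := by ring
    · -- go right
      refine ⟨ar, pr + 1, by simp [LTree.labels, har], ?_, ?_⟩
      · simp only [LTree.labels, List.length_append]
        calc 2 ^ (pr + 1) = 2 ^ pr + 2 ^ pr := by ring
          _ ≤ l.labels.length + r.labels.length := Nat.add_le_add (le_trans hside hpl) hpr
      · intro X _ _ pts f2 hf2 hreal
        classical
        have hext : ∀ Tset : Finset X, ∃ c ∈ halfspace d', ∃ fl ∈ treeClass (halfspace d') l,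
            ∃ fr ∈ treeClass (halfspace d') r,
            ∀ x, (if c (pts x) then fr (pts x) else fl (pts x)) = if x ∈ Tset then ar else f2 x := by
          intro Tset
          obtain ⟨g, hg, hgval⟩ := hreal Tset
          obtain ⟨c, hc, fl, hfl, fr, hfr, rfl⟩ := hg
          exact ⟨c, hc, fl, hfl, fr, hfr, fun x => hgval x⟩
        set B : Finset X := Finset.univ.filter (fun x => f2 x ∈ r.labels) with hB
        set A : Finset X := Finset.univ.filter (fun x => f2 x ∉ r.labels) with hA
        have hAcard : A.card ≤ d' + 1 := by
          apply halfspace_vc pts A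
          intro TA hTA
          obtain ⟨c, hc, fl, hfl, fr, hfr, hval⟩ := hext TA
          refine ⟨c, hc, ?_⟩
          intro x hxA
          have hx := hval x
          by_cases hxT : x ∈ TA
          · rw [if_pos hxT] at hx
            have hcx : c (pts x) = true := by
              by_contra hcf
              rw [Bool.not_eq_true] at hcf
              rw [hcf] at hx
              simp only [Bool.false_eq_true, if_false] at hx
              have h1 : fl (pts x) ∈ l.labels := treeClass_mem_labels l fl hfl (pts x)
              rw [hx] at h1
              exact hdisj _ h1 _ har rfl
            rw [hcx]
            exact (decide_eq_true hxT).symm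
          · rw [if_neg hxT] at hx
            have hcx : c (pts x) = false := by
              by_contra hct
              rw [Bool.not_eq_false] at hct
              rw [hct] at hx
              simp only [if_true] at hx
              have h1 : fr (pts x) ∈ r.labels := treeClass_mem_labels r fr hfr (pts x)
              rw [hx] at h1
              exact (Finset.mem_filter.mp hxA).2 h1
            rw [hcx]
            exact (decide_eq_false hxT).symm
        have hBcard : B.card ≤ pr * (d' + 1) := by
          have hkey := hcapr ↥B (inferInstance) (inferInstance)
            (fun x => pts x.val) (fun x => f2 x.val) (fun x => hf2 x.val) ?_
          · rwa [Fintype.card_coe] at hkey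
          · intro Tset'
            obtain ⟨c, hc, fl, hfl, fr, hfr, hval⟩ := hext (Tset'.image Subtype.val)
            refine ⟨fr, hfr, ?_⟩
            intro x'
            have hx := hval x'.val
            have hmem : (x'.val ∈ Tset'.image Subtype.val) ↔ (x' ∈ Tset') :=
              Subtype.val_injective.mem_finset_image
            have hcx : c (pts x'.val) = true := by
              by_contra hcf
              rw [Bool.not_eq_true] at hcf
              rw [hcf] at hx
              simp only [Bool.false_eq_true, if_false] at hx
              have h1 : fl (pts x'.val) ∈ l.labels := treeClass_mem_labels l fl hfl _
              rw [hx] at h1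
              by_cases h : x'.val ∈ Tset'.image Subtype.val
              · rw [if_pos h] at h1; exact hdisj _ h1 _ har rfl
              · rw [if_neg h] at h1; exact hdisj _ h1 _ (Finset.mem_filter.mp x'.2).2 rfl
            rw [hcx] at hx
            simp only [if_true] at hx
            show fr (pts x'.val) = _
            rw [hx]
            by_cases h : x' ∈ Tset'
            · rw [if_pos (hmem.mpr h), if_pos h]
            · rw [if_neg (fun hh => h (hmem.mp hh)), if_neg h]
        have hsplit : B.card + A.card = Fintype.card X := by
          rw [hB, hA, ← Finset.card_univ]
          exact Finset.card_filter_add_card_filter_not _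
        calc Fintype.card X = B.card + A.card := hsplit.symm
          _ ≤ pr * (d' + 1) + (d' + 1) := Nat.add_le_add hBcard hAcard
          _ = (pr + 1) * (d' + 1) := by ring

end Tree
section Shatter

open Finset

def shatPt (d : ℕ) {k : ℕ} (a : Fin k) (i : Fin (d-1) × {c : Fin k // c ≠ a}) :
    Fin d → ℝ := fun t =>
  if (t:ℕ) = 0 then ((i.2.val.val : ℝ))
  else if (t:ℕ) = 1 then ((i.2.val.val : ℝ))^2
  else if ((t:ℕ) = (i.1:ℕ) + 1 ∧ 1 ≤ (i.1:ℕ)) then 1 else 0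

def shatRow (d : ℕ) (sc : ℝ) (σc : ℕ → ℝ) : Fin (d+1) → ℝ := fun t =>
  if (t:ℕ) = 0 then 4 * sc
  else if (t:ℕ) = 1 then -2
  else if (t:ℕ) < d then σc ((t:ℕ) - 1) - σc 0
  else -2 * sc^2 + σc 0

lemma shatRow_sum {d k : ℕ} (hd : 2 ≤ d) (a : Fin k) (sc : ℝ) (σc : ℕ → ℝ)
    (i : Fin (d-1) × {c : Fin k // c ≠ a}) :
    ∑ t, shatRow d sc σc t * aug (shatPt d a i) t
      = -2 * (sc - (i.2.val.val : ℝ))^2 + σc (i.1 : ℕ) := by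
  set j : ℕ := (i.1 : ℕ) with hj
  set sc' : ℝ := ((i.2.val.val : ℝ)) with hsc'
  have hjd : j + 1 < d := by have := i.1.isLt; omega
  set Cc : ℝ := if 1 ≤ j then σc j - σc 0 else 0 with hCc
  set F : ℕ → ℝ := fun m =>
    (if m = 0 then 4*sc*sc' else 0) + (if m = 1 then -2*sc'^2 else 0)
      + (if m = j+1 then Cc else 0) + (if m = d then -2*sc^2 + σc 0 else 0) with hF
  have hpt : ∀ t : Fin (d+1), shatRow d sc σc t * aug (shatPt d a i) t = F (t:ℕ) := by
    rintro ⟨tv, htv⟩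
    simp only [shatRow, shatPt, aug_apply, hF]
    split_ifs <;>
      first
        | (exfalso; omega)
        | (rw [hCc, if_pos (by omega)]; rw [show tv - 1 = j by omega]; ring)
        | (rw [hCc, if_neg (by omega)]; ring)
        | ring
  calc ∑ t, shatRow d sc σc t * aug (shatPt d a i) t
      = ∑ t : Fin (d+1), F (t:ℕ) := Finset.sum_congr rfl fun t _ => hpt t
    _ = ∑ m ∈ Finset.range (d+1), F m := Fin.sum_univ_eq_sum_range F (d+1)
    _ = (4*sc*sc') + (-2*sc'^2) + Cc + (-2*sc^2 + σc 0) := by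
        rw [hF]
        rw [Finset.sum_add_distrib, Finset.sum_add_distrib, Finset.sum_add_distrib]
        rw [Finset.sum_ite_eq' (Finset.range (d+1)) 0,
            Finset.sum_ite_eq' (Finset.range (d+1)) 1,
            Finset.sum_ite_eq' (Finset.range (d+1)) (j+1),
            Finset.sum_ite_eq' (Finset.range (d+1)) d]
        simp only [Finset.mem_range]
        rw [if_pos (by omega), if_pos (by omega), if_pos (by omega), if_pos (by omega)]
    _ = -2 * (sc - sc')^2 + σc j := by
        rw [hCc]
        by_cases h1 : 1 ≤ j
        · rw [if_pos h1]; ring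
        · rw [if_neg h1]
          have : j = 0 := by omega
          rw [this]; ring

end Shatter
section Shatter2

open Finset

lemma nat_sub_sq_ge_one {m n : ℕ} (h : m ≠ n) : (1:ℝ) ≤ ((m:ℝ) - (n:ℝ))^2 := by
  have hz : ((m:ℤ) - (n:ℤ)) ≠ 0 := sub_ne_zero.mpr (by exact_mod_cast h)
  have h1 : (1:ℤ) ≤ ((m:ℤ) - n)^2 := by
    rcases hz.lt_or_gt with hlt | hgt
    · nlinarith
    · nlinarith
  exact_mod_cast h1

lemma msvm_shatters {d k : ℕ} [NeZero k] (hd : 2 ≤ d) (a : Fin k) :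
    ∃ pt : (Fin (d-1) × {c : Fin k // c ≠ a}) → (Fin d → ℝ),
      ∀ Tset : Finset (Fin (d-1) × {c : Fin k // c ≠ a}),
        ∃ h ∈ msvm d k, ∀ i, h (pt i) = if i ∈ Tset then a else i.2.val := by
  classical
  refine ⟨shatPt d a, ?_⟩
  intro Tset
  set σn : {c : Fin k // c ≠ a} → ℕ → ℝ := fun c m =>
    if h : m < d - 1 then (if ((⟨m, h⟩ : Fin (d-1)), c) ∈ Tset then -1 else 1) else 1 with hσn
  have hσbound : ∀ c m, σn c m ≤ 1 ∧ -1 ≤ σn c m := by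
    intro c m
    rw [hσn]
    dsimp only
    split_ifs <;> norm_num
  set W : Fin k → Fin (d+1) → ℝ := fun b =>
    if h : b = a then 0 else shatRow d ((b.val : ℝ)) (σn ⟨b, h⟩) with hW
  refine ⟨_, ⟨W, rfl⟩, ?_⟩
  intro i
  have hscore : ∀ b : Fin k,
      (∑ t, W b t * aug (shatPt d a i) t)
        = if h : b = a then 0
          else -2 * ((b.val : ℝ) - (i.2.val.val : ℝ))^2 + σn ⟨b, h⟩ (i.1 : ℕ) := by
    intro b
    by_cases hb : b = a
    · rw [dif_pos hb, hW]
      simp [dif_pos hb]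
    · rw [dif_neg hb, hW]
      simp only [dif_neg hb]
      exact shatRow_sum hd a _ _ i
  have hσval : σn i.2 (i.1 : ℕ) = if i ∈ Tset then -1 else 1 := by
    rw [hσn]
    dsimp only
    rw [dif_pos i.1.isLt]
  by_cases hiT : i ∈ Tset
  · rw [if_pos hiT]
    apply argmaxFin_eq_of_lt
    intro b hb
    rw [hscore b, hscore a, dif_pos rfl, dif_neg hb]
    by_cases hbc : b = i.2.val
    · have he : (⟨b, hb⟩ : {c : Fin k // c ≠ a}) = i.2 := Subtype.ext hbc
      rw [he]
      rw [hσval, if_pos hiT]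
      have : ((b.val : ℝ) - (i.2.val.val : ℝ)) = 0 := by rw [hbc]; ring
      rw [this]
      norm_num
    · have hsq : (1:ℝ) ≤ ((b.val : ℝ) - (i.2.val.val : ℝ))^2 :=
        nat_sub_sq_ge_one (fun hvv => hbc (Fin.ext hvv))
      have hσ := hσbound ⟨b, hb⟩ (i.1 : ℕ)
      nlinarith [hσ.1, hσ.2]
  · rw [if_neg hiT]
    apply argmaxFin_eq_of_lt
    intro b hb
    rw [hscore b, hscore i.2.val]
    have hi2 : ¬ (i.2.val = a) := i.2.2
    rw [dif_neg hi2]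
    have he : (⟨i.2.val, hi2⟩ : {c : Fin k // c ≠ a}) = i.2 := Subtype.ext rfl
    rw [he, hσval, if_neg hiT]
    have hz : ((i.2.val.val : ℝ) - (i.2.val.val : ℝ)) = 0 := by ring
    rw [hz]
    by_cases hba : b = a
    · rw [dif_pos hba]; norm_num
    · rw [dif_neg hba]
      have hsq : (1:ℝ) ≤ ((b.val : ℝ) - (i.2.val.val : ℝ))^2 :=
        nat_sub_sq_ge_one (fun hvv => hb (Fin.ext hvv))
      have hσ := hσbound ⟨b, hba⟩ (i.1 : ℕ)
      nlinarith [hσ.1, hσ.2]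

end Shatter2
section Transfer

open Finset

lemma exists_realizer {d k : ℕ} [NeZero k] {X : Type} [Fintype X] [Nonempty X]
    (pts : X → (Fin d → ℝ)) (lbl : X → Fin k)
    (G Hc : Set ((Fin d → ℝ) → Fin k))
    (hH : ∃ h ∈ Hc, ∀ i, h (pts i) = lbl i)
    (hcont : ∀ (D : Measure ((Fin d → ℝ) × Fin k)), IsProbabilityMeasure D →
      errStar D G ≤ errStar D Hc) :
    ∃ g ∈ G, ∀ i, g (pts i) = lbl i := by
  classical
  set m : ℕ := Fintype.card X with hm
  have hm0 : (m : ℝ≥0∞) ≠ 0 := by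
    simp [hm, Fintype.card_ne_zero]
  have hmtop : (m : ℝ≥0∞) ≠ ⊤ := ENNReal.natCast_ne_top m
  set D : Measure ((Fin d → ℝ) × Fin k) :=
    (m : ℝ≥0∞)⁻¹ • ∑ i : X, Measure.dirac (pts i, lbl i) with hD
  have hDapp : ∀ s : Set ((Fin d → ℝ) × Fin k),
      D s = (m : ℝ≥0∞)⁻¹ * ∑ i : X, s.indicator 1 (pts i, lbl i) := by
    intro s
    rw [hD, Measure.smul_apply, smul_eq_mul]
    congr 1
    rw [Measure.finset_sum_apply]
    exact Finset.sum_congr rfl fun i _ => Measure.dirac_apply _ s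
  have hprob : IsProbabilityMeasure D := by
    constructor
    rw [hDapp]
    simp only [Set.indicator_univ, Pi.one_apply]
    rw [Finset.sum_const, Finset.card_univ, ← hm, nsmul_eq_mul, mul_one]
    exact ENNReal.inv_mul_cancel hm0 hmtop
  obtain ⟨h₀, hh₀, hreal₀⟩ := hH
  have hHzero : errStar D Hc = 0 := by
    have hle : errStar D Hc ≤ D {p | h₀ p.1 ≠ p.2} := iInf₂_le h₀ hh₀
    have : D {p | h₀ p.1 ≠ p.2} = 0 := by
      rw [hDapp]
      have : ∀ i : X, ({p : (Fin d → ℝ) × Fin k | h₀ p.1 ≠ p.2}).indicator 1 (pts i, lbl i)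
          = (0 : ℝ≥0∞) := by
        intro i
        rw [Set.indicator_apply_eq_zero]
        intro hmem
        exact absurd (hreal₀ i) hmem
      rw [Finset.sum_congr rfl fun i _ => this i]
      simp
    exact le_antisymm (this ▸ hle) zero_le
  have hGzero : errStar D G ≤ 0 := hHzero ▸ hcont D hprob
  by_contra hno
  push_neg at hno
  have hlow : (m : ℝ≥0∞)⁻¹ ≤ errStar D G := by
    apply le_iInf₂
    intro g hg
    obtain ⟨i, hi⟩ := hno g hg
    rw [hDapp]
    have hge : (1 : ℝ≥0∞) ≤ ∑ i : X, ({p : (Fin d → ℝ) × Fin k | g p.1 ≠ p.2}).indicator 1 (pts i, lbl i) := by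
      have hmem : (pts i, lbl i) ∈ {p : (Fin d → ℝ) × Fin k | g p.1 ≠ p.2} := hi
      calc (1 : ℝ≥0∞) = ({p : (Fin d → ℝ) × Fin k | g p.1 ≠ p.2}).indicator 1 (pts i, lbl i) := by
            rw [Set.indicator_of_mem hmem]; rfl
        _ ≤ _ := Finset.single_le_sum (f := fun j : X => ({p : (Fin d → ℝ) × Fin k | g p.1 ≠ p.2}).indicator 1 (pts j, lbl j)) (fun _ _ => zero_le) (Finset.mem_univ i)
    calc (m : ℝ≥0∞)⁻¹ = (m : ℝ≥0∞)⁻¹ * 1 := (mul_one _).symm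
      _ ≤ _ := mul_le_mul_right hge _
  have : (m : ℝ≥0∞)⁻¹ = 0 := le_antisymm (le_trans hlow hGzero) zero_le
  rw [ENNReal.inv_eq_zero] at this
  exact hmtop this

end Transfer


/-- There is a universal constant C > 0 such that for all d ≥ 2, k ≥ 3, d' ≥ 2:
if ι : ℝ^d → ℝ^{d'} is any map and T is a tree for k classes such that W^{d'}_T ∘ ι essentially
contains the multiclass SVM class L over ℝ^d (its approximation error is no larger, for every
probability distribution D over ℝ^d × [k]), then d·(k−1) ≤ C·log₂(k)·d'·log(log₂(k)·d'). -/
theorem stmt11 : ∃ C : ℝ, 0 < C ∧ ∀ (d k d' : ℕ) [NeZero k], 2 ≤ d → 3 ≤ k → 2 ≤ d' →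
    ∀ (ι : (Fin d → ℝ) → (Fin d' → ℝ)) (T : LTree k), T.IsTreeFor →
      (∀ (D : Measure ((Fin d → ℝ) × Fin k)), IsProbabilityMeasure D →
        errStar D ((fun h => h ∘ ι) '' treeClass (halfspace d') T) ≤ errStar D (msvm d k)) →
      (d * (k - 1) : ℝ) ≤ C * Real.logb 2 k * d' * Real.log (Real.logb 2 k * d') := by
  classical
  refine ⟨3, by norm_num, ?_⟩
  intro d k d' _ hd hk hd' ι T hT hcont
  -- tree labels facts
  have hnd : T.labels.Nodup := hT.nodup_iff.mpr (List.nodup_finRange k)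
  have hlen : T.labels.length = k := by
    rw [hT.length_eq, List.length_finRange]
  obtain ⟨a, p, ha, hp, hcap⟩ := tree_capacity (d' := d') T hnd
  rw [hlen] at hp
  -- shattered set for msvm
  obtain ⟨pt, hshat⟩ := msvm_shatters (k := k) hd a
  have hne : Nonempty (Fin (d-1) × {c : Fin k // c ≠ a}) := by
    obtain ⟨b, hb⟩ : ∃ b : Fin k, b ≠ a := by
      rcases eq_or_ne a ⟨0, by omega⟩ with h | h
      · exact ⟨⟨1, by omega⟩, by rw [h]; simp [Fin.ext_iff]⟩
      · exact ⟨⟨0, by omega⟩, fun hh => h hh.symm⟩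
    exact ⟨(⟨0, by omega⟩, ⟨b, hb⟩)⟩
  -- realizability of every sub-labeling by the tree class
  have hreal : ∀ Tset : Finset (Fin (d-1) × {c : Fin k // c ≠ a}),
      ∃ g ∈ treeClass (halfspace d') T,
      ∀ i : Fin (d-1) × {c : Fin k // c ≠ a},
        g (ι (pt i)) = if i ∈ Tset then a else i.2.val := by
    intro Tset
    obtain ⟨g, hgmem, hgval⟩ := exists_realizer pt
      (fun i => if i ∈ Tset then a else i.2.val)
      ((fun h => h ∘ ι) '' treeClass (halfspace d') T) (msvm d k)
      (hshat Tset) hcont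
    obtain ⟨h, hh, rfl⟩ := hgmem
    exact ⟨h, hh, fun i => hgval i⟩
  have hcard := hcap (Fin (d-1) × {c : Fin k // c ≠ a}) inferInstance inferInstance
    (fun i => ι (pt i)) (fun i => i.2.val) (fun i => i.2.2) hreal
  have hXcard : Fintype.card (Fin (d-1) × {c : Fin k // c ≠ a}) = (d-1) * (k-1) := by
    rw [Fintype.card_prod, Fintype.card_fin]
    congr 1
    rw [Fintype.card_subtype_compl, Fintype.card_fin, Fintype.card_subtype_eq]
  rw [hXcard] at hcard
  -- now real arithmetic
  set L : ℝ := Real.logb 2 k with hL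
  have hkpos : (0:ℝ) < k := by positivity
  have hL32 : (3/2 : ℝ) ≤ L := by
    rw [hL, Real.le_logb_iff_rpow_le (by norm_num) hkpos]
    have h8 : ((2:ℝ)^((3:ℝ)/2))^(2:ℕ) = 8 := by
      rw [← Real.rpow_natCast ((2:ℝ)^((3:ℝ)/2)) 2, ← Real.rpow_mul (by norm_num)]
      norm_num
    have hpos : (0:ℝ) ≤ (2:ℝ)^((3:ℝ)/2) := Real.rpow_nonneg (by norm_num) _
    have hk3 : (3:ℝ) ≤ k := by exact_mod_cast hk
    nlinarith [h8, hpos, hk3]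
  have hpL : (p:ℝ) ≤ L := by
    rw [hL, Real.le_logb_iff_rpow_le (by norm_num) hkpos]
    rw [Real.rpow_natCast]
    exact_mod_cast hp
  have hd'2 : (2:ℝ) ≤ d' := by exact_mod_cast hd'
  have hlog1 : (1:ℝ) ≤ Real.log (L * d') := by
    rw [Real.le_log_iff_exp_le (by nlinarith)]
    have := Real.exp_one_lt_d9
    nlinarith
  have h1 : ((d:ℝ) - 1) * ((k:ℝ) - 1) ≤ (p:ℝ) * ((d':ℝ) + 1) := by
    have := hcard
    have hcast : (((d-1) * (k-1) : ℕ) : ℝ) ≤ ((p * (d'+1) : ℕ) : ℝ) := by exact_mod_cast this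
    push_cast [Nat.cast_sub (by omega : 1 ≤ d), Nat.cast_sub (by omega : 1 ≤ k)] at hcast
    exact_mod_cast hcast
  have hd2 : (2:ℝ) ≤ d := by exact_mod_cast hd
  have hk3 : (3:ℝ) ≤ k := by exact_mod_cast hk
  have hppos : (0:ℝ) ≤ p := Nat.cast_nonneg p
  have c1 : (d:ℝ) * ((k:ℝ) - 1) ≤ 2 * (((d:ℝ) - 1) * ((k:ℝ) - 1)) := by nlinarith
  have c3 : (p:ℝ) * ((d':ℝ) + 1) ≤ L * ((d':ℝ) + 1) :=
    mul_le_mul_of_nonneg_right hpL (by linarith)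
  have c4 : 2 * (L * ((d':ℝ) + 1)) ≤ 3 * L * d' := by nlinarith
  have c5 : 3 * L * (d':ℝ) ≤ 3 * L * d' * Real.log (L * d') := by nlinarith
  calc (d:ℝ) * ((k:ℝ) - 1) ≤ 2 * (((d:ℝ) - 1) * ((k:ℝ) - 1)) := c1
    _ ≤ 2 * ((p:ℝ) * ((d':ℝ) + 1)) := by linarith
    _ ≤ 2 * (L * ((d':ℝ) + 1)) := by linarith
    _ ≤ 3 * L * d' := c4
    _ ≤ 3 * L * d' * Real.log (L * d') := c5
end

section
/- There exists a universal constant C > 0 such that the following holds for all integers d, l ≥ 2 and k ≥ 2. Let L : {±1}^l → [k] be any function, let H ⊆ {±1}^X be a binary hypothesis class of VC dimension d, and define L(H) = {x ↦ L(h₁(x),…,h_l(x)) : h₁,…,h_l ∈ H}. Then the graph dimension of L(H) satisfies d_G(L(H)) ≤ C·l·d·ln(l·d). -/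
open MeasureTheory
open scoped ENNReal

/-- Growth function bound via Sauer-Shelah. -/
theorem my_growth {X : Type*} (H : Set (X → Bool)) (d : ℕ) (hH : VCDimLE H d)
    (S : Finset X) :
    Nat.card {u : {x // x ∈ S} → Bool | ∃ h ∈ H, u = fun x => h x.1} ≤
      ∑ i ∈ Finset.Iic d, (S.card).choose i := by
  classical
  set F : Set ({x // x ∈ S} → Bool) := {u | ∃ h ∈ H, u = fun x => h x.1} with hF
  have hFfin : F.Finite := Set.toFinite F
  set 𝓕 : Finset (Finset {x // x ∈ S}) :=
    hFfin.toFinset.image (fun u => Finset.univ.filter (fun x => u x = true)) with h𝓕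
  have hinj : Function.Injective (fun u : {x // x ∈ S} → Bool =>
      Finset.univ.filter (fun x => u x = true)) := by
    intro u v huv
    funext x
    have hx := Finset.ext_iff.mp huv x
    simp only [Finset.mem_filter, Finset.mem_univ, true_and] at hx
    cases h1 : u x <;> cases h2 : v x <;> simp_all
  -- cardinality equality
  have hcard : Nat.card F = 𝓕.card := by
    rw [h𝓕, Finset.card_image_of_injective _ hinj, Nat.card_coe_set_eq,
      Set.ncard_eq_toFinset_card F hFfin]
  -- VC dimension of 𝓕 is at most d
  have hvc : 𝓕.vcDim ≤ d := by
    apply Finset.sup_le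
    intro s hs
    have hsh : 𝓕.Shatters s := Finset.mem_shatterer.mp hs
    have : (s.map (Function.Embedding.subtype _)).card ≤ d := by
      apply hH
      intro b
      obtain ⟨u, hu𝓕, hu⟩ := hsh (Finset.filter_subset (fun x => b x.1 = true) s)
      rw [h𝓕, Finset.mem_image] at hu𝓕
      obtain ⟨w, hwF, rfl⟩ := hu𝓕
      rw [Set.Finite.mem_toFinset] at hwF
      obtain ⟨h, hhH, rfl⟩ := hwF
      refine ⟨h, hhH, ?_⟩
      intro x hx
      rw [Finset.mem_map] at hx
      obtain ⟨y, hys, rfl⟩ := hx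
      have hy := Finset.ext_iff.mp hu y
      simp only [Finset.mem_inter, Finset.mem_filter, Finset.mem_univ, true_and,
        Function.Embedding.coe_subtype] at hy ⊢
      cases h1 : h y.1 <;> cases h2 : b y.1 <;> simp_all
    simpa using this
  calc Nat.card F = 𝓕.card := hcard
    _ ≤ 𝓕.shatterer.card := Finset.card_le_card_shatterer 𝓕
    _ ≤ ∑ i ∈ Finset.Iic 𝓕.vcDim, (Fintype.card {x // x ∈ S}).choose i :=
        Finset.card_shatterer_le_sum_vcDim
    _ ≤ ∑ i ∈ Finset.Iic d, (Fintype.card {x // x ∈ S}).choose i := by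
        apply Finset.sum_le_sum_of_subset
        exact Finset.Iic_subset_Iic.mpr hvc
    _ = ∑ i ∈ Finset.Iic d, (S.card).choose i := by rw [Fintype.card_coe]

theorem my_sum_choose (m d : ℕ) (hm : 1 ≤ m) (hd : 1 ≤ d) :
    ∑ i ∈ Finset.Iic d, m.choose i ≤ (m + 1) ^ (2 * d) := by
  have h1 : ∀ i ∈ Finset.Iic d, m.choose i ≤ (m + 1) ^ d := by
    intro i hi
    calc m.choose i ≤ m ^ i := Nat.choose_le_pow m i
      _ ≤ m ^ d := Nat.pow_le_pow_right hm (Finset.mem_Iic.mp hi)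
      _ ≤ (m + 1) ^ d := Nat.pow_le_pow_left (Nat.le_succ m) d
  calc ∑ i ∈ Finset.Iic d, m.choose i ≤ ∑ _i ∈ Finset.Iic d, (m + 1) ^ d :=
        Finset.sum_le_sum h1
    _ = (d + 1) * (m + 1) ^ d := by rw [Finset.sum_const, Nat.card_Iic, smul_eq_mul]
    _ ≤ 2 ^ d * (m + 1) ^ d := by
        exact Nat.mul_le_mul_right _ (Nat.lt_two_pow_self (n := d))
    _ ≤ (m + 1) ^ d * (m + 1) ^ d := by
        exact Nat.mul_le_mul_right _ (Nat.pow_le_pow_left (by omega) d)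
    _ = (m + 1) ^ (2 * d) := by rw [two_mul, pow_add]

set_option maxHeartbeats 1000000 in
theorem my_real (m d l : ℕ) (hd : 2 ≤ d) (hl : 2 ≤ l)
    (h : 2 ^ m ≤ (m + 1) ^ (2 * d * l)) :
    (m : ℝ) ≤ 100 * l * d * Real.log (l * d) := by
  have hD : (2 : ℝ) ≤ d := by exact_mod_cast hd
  have hL : (2 : ℝ) ≤ l := by exact_mod_cast hl
  set a : ℝ := 4 * d * l with ha_def
  have ha : (16 : ℝ) ≤ a := by nlinarith
  have hm1 : (1 : ℝ) ≤ (m : ℝ) + 1 := by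
    have := Nat.cast_nonneg (α := ℝ) m
    linarith
  have hcast : (2 : ℝ) ^ m ≤ ((m : ℝ) + 1) ^ (2 * d * l) := by exact_mod_cast h
  have hlog : (m : ℝ) * Real.log 2 ≤ (2 * d * l : ℕ) * Real.log ((m : ℝ) + 1) := by
    have := Real.log_le_log (by positivity) hcast
    rwa [Real.log_pow, Real.log_pow] at this
  have hlog2 : (1 : ℝ) / 2 ≤ Real.log 2 := by
    have := Real.log_two_gt_d9
    linarith
  have hlogm : 0 ≤ Real.log ((m : ℝ) + 1) := Real.log_nonneg hm1
  have hA : (m : ℝ) ≤ a * Real.log ((m : ℝ) + 1) := by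
    have h2 : ((2 * d * l : ℕ) : ℝ) = 2 * d * l := by push_cast; ring
    rw [h2] at hlog
    nlinarith
  have hsqrt1 : (1 : ℝ) ≤ Real.sqrt ((m : ℝ) + 1) := Real.one_le_sqrt.mpr hm1
  have hlm : Real.log ((m : ℝ) + 1) ≤ 2 * Real.sqrt ((m : ℝ) + 1) := by
    have hs := Real.log_le_sub_one_of_pos (show 0 < Real.sqrt ((m : ℝ) + 1) by linarith)
    rw [Real.log_sqrt (by positivity)] at hs
    linarith
  have hsqsq : Real.sqrt ((m : ℝ) + 1) * Real.sqrt ((m : ℝ) + 1) = (m : ℝ) + 1 :=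
    Real.mul_self_sqrt (by positivity)
  have hsq : (m : ℝ) + 1 ≤ 9 * a ^ 2 := by
    have h3 : (m : ℝ) + 1 ≤ 3 * a * Real.sqrt ((m : ℝ) + 1) := by nlinarith
    nlinarith [sq_nonneg (Real.sqrt ((m : ℝ) + 1) - 3 * a)]
  have ha2 : (256 : ℝ) ≤ a ^ 2 := by nlinarith
  have h9 : (9 : ℝ) * a ^ 2 ≤ a ^ 4 := by nlinarith [sq_nonneg a, sq_nonneg (a^2)]
  have hfin : Real.log ((m : ℝ) + 1) ≤ 4 * Real.log a := by
    calc Real.log ((m : ℝ) + 1) ≤ Real.log (a ^ 4) :=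
          Real.log_le_log (by positivity) (by linarith)
      _ = 4 * Real.log a := by rw [Real.log_pow]; push_cast; ring
  have hla : Real.log a ≤ 2 * Real.log (l * d) := by
    calc Real.log a ≤ Real.log (((l : ℝ) * d) ^ 2) :=
          Real.log_le_log (by positivity) (by nlinarith)
      _ = 2 * Real.log (l * d) := by rw [Real.log_pow]; push_cast; ring
  have hlogld : 0 ≤ Real.log ((l : ℝ) * d) := Real.log_nonneg (by nlinarith)
  calc (m : ℝ) ≤ a * Real.log ((m : ℝ) + 1) := hA
    _ ≤ a * (4 * Real.log a) := by
        apply mul_le_mul_of_nonneg_left hfin (by linarith)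
    _ ≤ a * (4 * (2 * Real.log (l * d))) := by
        apply mul_le_mul_of_nonneg_left (by linarith) (by linarith)
    _ = 32 * d * l * Real.log (l * d) := by rw [ha_def]; ring
    _ ≤ 100 * l * d * Real.log (l * d) := by nlinarith

theorem my_main : ∀ (d l k : ℕ), 2 ≤ d → 2 ≤ l → 2 ≤ k →
    ∀ (X : Type*) (L : (Fin l → Bool) → Fin k) (H : Set (X → Bool)), VCDimLE H d →
      ∀ S : Finset X,
        GShatters { g : X → Fin k | ∃ h : Fin l → X → Bool,
          (∀ j, h j ∈ H) ∧ g = fun x => L (fun j => h j x) } ↑S →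
        (S.card : ℝ) ≤ 100 * l * d * Real.log (l * d) := by
  classical
  intro d l k hd hl hk X L H hH S hGS
  by_cases hm0 : S.card = 0
  · rw [hm0]
    push_cast
    have h1 : (0:ℝ) ≤ Real.log (l * d) := by
      apply Real.log_nonneg
      have : (2:ℝ) ≤ l := by exact_mod_cast hl
      have : (2:ℝ) ≤ d := by exact_mod_cast hd
      nlinarith
    have h2 : (0:ℝ) ≤ (l : ℝ) := Nat.cast_nonneg l
    have h3 : (0:ℝ) ≤ (d : ℝ) := Nat.cast_nonneg d
    positivity
  -- the counting argument
  obtain ⟨f, hf⟩ := hGS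
  set R : Set ({x // x ∈ S} → Fin k) :=
    {v | ∃ h : Fin l → X → Bool, (∀ j, h j ∈ H) ∧ v = fun x => L (fun j => h j x.1)} with hR
  set F : Set ({x // x ∈ S} → Bool) := {u | ∃ h ∈ H, u = fun x => h x.1} with hFdef
  -- step 1 : 2 ^ S.card ≤ Nat.card R
  have step1 : 2 ^ S.card ≤ Nat.card R := by
    choose g hmem hT hS using fun T : {T // T ∈ S.powerset} =>
      hf ↑T.1 (Finset.coe_subset.mpr (Finset.mem_powerset.mp T.2))
    have hΦmem : ∀ T : {T // T ∈ S.powerset}, (fun x : {x // x ∈ S} => g T x.1) ∈ R := by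
      intro T
      obtain ⟨h, hh, hg'⟩ := hmem T
      exact ⟨h, hh, by rw [hg']⟩
    set Φ : {T // T ∈ S.powerset} → R := fun T => ⟨fun x => g T x.1, hΦmem T⟩ with hΦ
    have hinj : Function.Injective Φ := by
      intro T T' hTT'
      have heq : ∀ x : {x // x ∈ S}, g T x.1 = g T' x.1 := by
        intro x
        exact congrFun (congrArg Subtype.val hTT') x
      have key : ∀ (T : {T // T ∈ S.powerset}) (x : X) (hx : x ∈ S),
          x ∈ T.1 ↔ g T x = f x := by
        intro T x hx
        constructor
        · intro hxT
          exact hT T x (by exact_mod_cast hxT)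
        · intro hgx
          by_contra hxT
          exact hS T x ⟨hx, by exact_mod_cast hxT⟩ hgx
      apply Subtype.ext
      apply Finset.ext
      intro x
      by_cases hx : x ∈ S
      · rw [key T x hx, key T' x hx, heq ⟨x, hx⟩]
      · constructor
        · intro hxT
          exact absurd (Finset.mem_powerset.mp T.2 hxT) hx
        · intro hxT
          exact absurd (Finset.mem_powerset.mp T'.2 hxT) hx
    calc 2 ^ S.card = S.powerset.card := (Finset.card_powerset S).symm
      _ = Nat.card {T // T ∈ S.powerset} := by
          rw [Nat.card_eq_fintype_card, Fintype.card_coe]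
      _ ≤ Nat.card R := Nat.card_le_card_of_injective Φ hinj
  -- step 2 : Nat.card R ≤ (Nat.card F) ^ l
  have step2 : Nat.card R ≤ (Nat.card F) ^ l := by
    choose h hhH hval using fun v : R => v.2
    set Ψ : R → (Fin l → F) := fun v j => ⟨fun x => h v j x.1, ⟨h v j, hhH v j, rfl⟩⟩
      with hΨdef
    have hinj : Function.Injective Ψ := by
      intro v v' hvv'
      apply Subtype.ext
      rw [hval v, hval v']
      funext x
      congr 1
      funext j
      exact congrFun (congrArg Subtype.val (congrFun hvv' j)) x
    calc Nat.card R ≤ Nat.card (Fin l → F) := Nat.card_le_card_of_injective Ψ hinj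
      _ = (Nat.card F) ^ l := by
          rw [Nat.card_pi, Finset.prod_const, Finset.card_univ, Fintype.card_fin]
  -- step 3
  have step3 : Nat.card F ≤ (S.card + 1) ^ (2 * d) := by
    calc Nat.card F ≤ ∑ i ∈ Finset.Iic d, (S.card).choose i := my_growth H d hH S
      _ ≤ (S.card + 1) ^ (2 * d) := my_sum_choose S.card d (by omega) (by omega)
  have key : 2 ^ S.card ≤ (S.card + 1) ^ (2 * d * l) := by
    calc 2 ^ S.card ≤ Nat.card R := step1
      _ ≤ (Nat.card F) ^ l := step2
      _ ≤ ((S.card + 1) ^ (2 * d)) ^ l := Nat.pow_le_pow_left step3 l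
      _ = (S.card + 1) ^ (2 * d * l) := by rw [← pow_mul]
  exact my_real S.card d l hd hl key

/-- There is a universal constant C > 0 such that for all integers d, l ≥ 2,
k ≥ 2, every function L : {±1}^l → [k] and every binary class H of VC dimension d, the graph
dimension of L(H) = {x ↦ L(h₁(x),…,h_l(x)) : h₁,…,h_l ∈ H} is at most C·l·d·ln(l·d). -/
theorem stmt15 : ∃ C : ℝ, 0 < C ∧ ∀ (d l k : ℕ), 2 ≤ d → 2 ≤ l → 2 ≤ k →
    ∀ (X : Type*) (L : (Fin l → Bool) → Fin k) (H : Set (X → Bool)), VCDimLE H d →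
      ∀ S : Finset X,
        GShatters { g : X → Fin k | ∃ h : Fin l → X → Bool,
          (∀ j, h j ∈ H) ∧ g = fun x => L (fun j => h j x) } ↑S →
        (S.card : ℝ) ≤ C * l * d * Real.log (l * d) :=
  ⟨100, by norm_num, my_main⟩
end

section
/- For all integers d ≥ 2, k ≥ 2, l ≥ 2 and any code matrix M ∈ ℝ^{k×l}: if there exists a q-sensitive vector for M, then the Natarajan dimension of the ECOC class W^d_M built on halfspaces over ℝ^d satisfies d_N(W^d_M) ≥ d·q. -/
open MeasureTheory
open scoped ENNReal

section ECOCAux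

open Classical

noncomputable def dotv {d : ℕ} (a x : Fin d → ℝ) : ℝ := ∑ m, a m * x m

noncomputable def ptv (d j i : ℕ) : Fin d → ℝ := fun m =>
  if (m : ℕ) = 0 then (j : ℝ) + (if i = 1 then 4⁻¹ else 0)
  else if (m : ℕ) = 1 then (j : ℝ) ^ 2 + (if i = 1 then (j : ℝ) / 2 else 0)
  else if (m : ℕ) = i then 1 else 0

lemma mem_halfspace {d : ℕ} (w : Fin d → ℝ) (b : ℝ) :
    (fun x => decide (0 ≤ dotv w x + b)) ∈ halfspace d := by
  refine ⟨fun m => if h : (m : ℕ) < d then w ⟨m, h⟩ else b, ?_⟩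
  funext x
  congr 1
  rw [Fin.sum_univ_castSucc]
  have h1 : ∀ m : Fin d,
      (if h : ((Fin.castSucc m : Fin (d+1)) : ℕ) < d then w ⟨_, h⟩ else b) * aug x m.castSucc
        = w m * x m := by
    intro m
    rw [dif_pos (by simpa using m.isLt)]
    simp [aug, Fin.snoc_castSucc]
  rw [Finset.sum_congr rfl fun m _ => h1 m]
  have h2 : (if h : ((Fin.last d : Fin (d+1)) : ℕ) < d then w ⟨_, h⟩ else b) * aug x (Fin.last d)
      = b := by
    rw [dif_neg (by simp)]
    simp [aug, Fin.snoc_last]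
  rw [h2, dotv]

lemma const_mem_halfspace {d : ℕ} (c : Bool) : (fun _ => c) ∈ halfspace d := by
  have := mem_halfspace (d := d) (fun _ => 0) (if c then 1 else -1)
  convert this using 1
  funext x
  have : dotv (fun _ => (0:ℝ)) x = 0 := by simp [dotv]
  rw [this]
  cases c <;> norm_num

end ECOCAux
lemma dotv_ptv {d : ℕ} (hd : 2 ≤ d) (a : Fin d → ℝ) (j i : ℕ) (hi : i < d) :
    dotv a (ptv d j i) =
      a ⟨0, by omega⟩ * ((j : ℝ) + (if i = 1 then 4⁻¹ else 0)) +
      a ⟨1, by omega⟩ * ((j : ℝ) ^ 2 + (if i = 1 then (j : ℝ) / 2 else 0)) +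
      (if 2 ≤ i then a ⟨i, hi⟩ else 0) := by
  have hpt : ∀ m : Fin d, ptv d j i m =
      (if m = (⟨0, by omega⟩ : Fin d) then ((j : ℝ) + (if i = 1 then 4⁻¹ else 0)) else 0) +
      (if m = (⟨1, by omega⟩ : Fin d) then ((j : ℝ) ^ 2 + (if i = 1 then (j : ℝ) / 2 else 0)) else 0) +
      (if 2 ≤ i then (if m = (⟨i, hi⟩ : Fin d) then 1 else 0) else 0) := by
    intro m
    simp only [ptv, Fin.ext_iff]
    split_ifs <;> first | ring1 | (exfalso; omega)
  unfold dotv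
  rw [Finset.sum_congr rfl fun m _ => by rw [hpt m]]
  by_cases h2 : 2 ≤ i
  · simp only [if_pos h2, mul_add, mul_ite, mul_zero, mul_one]
    rw [Finset.sum_add_distrib, Finset.sum_add_distrib]
    simp [Finset.sum_ite_eq']
  · simp only [if_neg h2, mul_add, mul_ite, mul_zero, mul_one]
    rw [Finset.sum_add_distrib, Finset.sum_add_distrib]
    simp [Finset.sum_ite_eq']
lemma ptv_inj {d : ℕ} (hd : 2 ≤ d) {j i j' i' : ℕ} (hi : i < d) (hi' : i' < d)
    (h : ptv d j i = ptv d j' i') : j = j' ∧ i = i' := by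
  have e0 := congrFun h ⟨0, by omega⟩
  simp only [ptv] at e0
  norm_num at e0
  by_cases hi1 : i = 1 <;> by_cases hi'1 : i' = 1
  · rw [if_pos hi1, if_pos hi'1] at e0
    have : (j : ℝ) = j' := by linarith
    exact ⟨by exact_mod_cast this, by omega⟩
  · rw [if_pos hi1, if_neg hi'1] at e0
    exfalso
    have : (4 * j + 1 : ℝ) = 4 * j' := by push_cast; linarith
    have : 4 * j + 1 = 4 * j' := by exact_mod_cast this
    omega
  · rw [if_neg hi1, if_pos hi'1] at e0
    exfalso
    have : (4 * j' + 1 : ℝ) = 4 * j := by push_cast; linarith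
    have : 4 * j' + 1 = 4 * j := by exact_mod_cast this
    omega
  · rw [if_neg hi1, if_neg hi'1] at e0
    have hjj : j = j' := by
      have : (j : ℝ) = j' := by linarith
      exact_mod_cast this
    refine ⟨hjj, ?_⟩
    rcases Nat.lt_or_ge i 2 with h2 | h2 <;> rcases Nat.lt_or_ge i' 2 with h2' | h2'
    · omega
    · exfalso
      have e := congrFun h ⟨i', hi'⟩
      simp only [ptv] at e
      split_ifs at e <;> first | omega | norm_num at e
    · exfalso
      have e := congrFun h ⟨i, hi⟩
      simp only [ptv] at e
      split_ifs at e <;> first | omega | norm_num at e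
    · have e := congrFun h ⟨i, hi⟩
      simp only [ptv] at e
      split_ifs at e <;> first | omega | norm_num at e
noncomputable def snv (d : ℕ) (σ : Fin d → Bool) (v : Bool) (n : ℕ) : ℝ :=
  if hn : n < d then (if σ ⟨n, hn⟩ = v then 1 else -1) else 0

noncomputable def muv (q : ℕ) : ℝ := 1 / (100 * (q + 1))

noncomputable def wvec (d q : ℕ) (σ : Fin d → Bool) (v : Bool) (j : ℕ) : Fin d → ℝ :=
  fun m => (if v then (1:ℝ) else -1) *
    (if (m : ℕ) = 0 then -2*(j:ℝ) + muv q * (8 * snv d σ v 1 - 4 * snv d σ v 0)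
     else if (m : ℕ) = 1 then 1
     else muv q * (2 * snv d σ v m - snv d σ v 0))

noncomputable def bval (d q : ℕ) (σ : Fin d → Bool) (v : Bool) (j : ℕ) : ℝ :=
  (if v then (1:ℝ) else -1) *
    ((j:ℝ)^2 - muv q * ((j:ℝ) * (8 * snv d σ v 1 - 4 * snv d σ v 0)) + muv q * snv d σ v 0)

lemma val_formula {d : ℕ} (hd : 2 ≤ d) (q : ℕ) (σ : Fin d → Bool) (v : Bool)
    (j j'' i : ℕ) (hi : i < d) :
    dotv (wvec d q σ v j) (ptv d j'' i) + bval d q σ v j =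
      (if v then (1:ℝ) else -1) *
        (((j'':ℝ) - j)^2 + (if i = 1 then ((j'':ℝ) - j)/2 else 0)
          + muv q * ((8 * snv d σ v 1 - 4 * snv d σ v 0) * ((j'':ℝ) - j)
              + (if i = 1 then (8 * snv d σ v 1 - 4 * snv d σ v 0)/4 else 0)
              + (if 2 ≤ i then 2 * snv d σ v i - snv d σ v 0 else 0)
              + snv d σ v 0)) := by
  rw [dotv_ptv hd _ j'' i hi]
  simp only [wvec, bval]
  norm_num
  split_ifs <;> first | ring1 | (exfalso; omega)
lemma decide_sign (μ c : ℝ) (hμ : 0 < μ) (hc : 0 < c) (bσ bv : Bool) :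
    decide (0 ≤ (if bv then (1:ℝ) else -1) * (μ * (c * (if bσ = bv then (1:ℝ) else -1)))) = bσ := by
  have hp : 0 < μ * c := mul_pos hμ hc
  cases bσ <;> cases bv <;>
    simp only [decide_eq_true_eq, decide_eq_false_iff_not, not_le,
      show ((false = false) : Prop) = True by simp, show ((false = true) : Prop) = False by simp,
      show ((true = false) : Prop) = False by simp, show ((true = true) : Prop) = True by simp,
      if_true, if_false] <;> nlinarith

lemma own_val {d : ℕ} (hd : 2 ≤ d) (q : ℕ) (σ : Fin d → Bool) (v : Bool)
    (j i : ℕ) (hi : i < d) :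
    decide (0 ≤ dotv (wvec d q σ v j) (ptv d j i) + bval d q σ v j) = σ ⟨i, hi⟩ := by
  rw [val_formula hd q σ v j j i hi]
  have hμ : 0 < muv q := by unfold muv; positivity
  have hsni : snv d σ v i = if σ ⟨i, hi⟩ = v then 1 else -1 := by rw [snv, dif_pos hi]
  by_cases hi1 : i = 1
  · subst hi1
    have he : (if v then (1:ℝ) else -1) *
        (((j:ℝ) - j)^2 + (if 1 = 1 then ((j:ℝ) - j)/2 else 0)
          + muv q * ((8 * snv d σ v 1 - 4 * snv d σ v 0) * ((j:ℝ) - j)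
              + (if 1 = 1 then (8 * snv d σ v 1 - 4 * snv d σ v 0)/4 else 0)
              + (if 2 ≤ 1 then 2 * snv d σ v 1 - snv d σ v 0 else 0)
              + snv d σ v 0))
        = (if v then (1:ℝ) else -1) *
            (muv q * (2 * (if σ ⟨1, hi⟩ = v then (1:ℝ) else -1))) := by
      rw [if_pos rfl, if_pos rfl, if_neg (show ¬(2 ≤ 1) by omega), hsni]
      ring1
    rw [he]
    exact decide_sign _ 2 hμ (by norm_num) _ _
  · by_cases hi0 : i = 0
    · subst hi0
      have he : (if v then (1:ℝ) else -1) *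
          (((j:ℝ) - j)^2 + (if 0 = 1 then ((j:ℝ) - j)/2 else 0)
            + muv q * ((8 * snv d σ v 1 - 4 * snv d σ v 0) * ((j:ℝ) - j)
                + (if 0 = 1 then (8 * snv d σ v 1 - 4 * snv d σ v 0)/4 else 0)
                + (if 2 ≤ 0 then 2 * snv d σ v 0 - snv d σ v 0 else 0)
                + snv d σ v 0))
          = (if v then (1:ℝ) else -1) *
              (muv q * (1 * (if σ ⟨0, hi⟩ = v then (1:ℝ) else -1))) := by
        rw [if_neg (show ¬((0:ℕ) = 1) by omega), if_neg (show ¬((0:ℕ) = 1) by omega),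
          if_neg (show ¬(2 ≤ 0) by omega), hsni]
        ring1
      rw [he]
      exact decide_sign _ 1 hμ (by norm_num) _ _
    · have h2 : 2 ≤ i := by omega
      have he : (if v then (1:ℝ) else -1) *
          (((j:ℝ) - j)^2 + (if i = 1 then ((j:ℝ) - j)/2 else 0)
            + muv q * ((8 * snv d σ v 1 - 4 * snv d σ v 0) * ((j:ℝ) - j)
                + (if i = 1 then (8 * snv d σ v 1 - 4 * snv d σ v 0)/4 else 0)
                + (if 2 ≤ i then 2 * snv d σ v i - snv d σ v 0 else 0)
                + snv d σ v 0))
          = (if v then (1:ℝ) else -1) *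
              (muv q * (2 * (if σ ⟨i, hi⟩ = v then (1:ℝ) else -1))) := by
        rw [if_neg hi1, if_neg hi1, if_pos h2, hsni]
        ring1
      rw [he]
      exact decide_sign _ 2 hμ (by norm_num) _ _
lemma core_pos (q : ℕ) (Δ P E : ℝ) (hΔ1 : 1 ≤ |Δ|) (hΔq : |Δ| ≤ q)
    (hP : P = 0 ∨ P = Δ / 2) (hE : |E| ≤ 12 * |Δ| + 7) :
    0 < Δ ^ 2 + P + muv q * E := by
  set A := |Δ| with hA
  have hA0 : 0 ≤ A := abs_nonneg _
  have hsq : Δ ^ 2 = A ^ 2 := (sq_abs Δ).symm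
  have hPl : -(A / 2) ≤ P := by
    rcases hP with h | h <;> rw [h]
    · linarith
    · have := neg_abs_le Δ
      linarith
  have hEl : -(12 * A + 7) ≤ E := by
    have := neg_abs_le E
    linarith
  have hq0 : (0:ℝ) ≤ q := Nat.cast_nonneg q
  have hμ : 0 < muv q := by unfold muv; positivity
  have hmul : muv q * (12 * (q:ℝ) + 7) ≤ 1 / 4 := by
    unfold muv
    rw [div_mul_eq_mul_div, div_le_div_iff₀ (by positivity) (by norm_num)]
    nlinarith
  have hME : -(1/4) ≤ muv q * E := by
    have h1 : muv q * (-(12 * A + 7)) ≤ muv q * E :=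
      mul_le_mul_of_nonneg_left hEl (le_of_lt hμ)
    have h2 : muv q * (12 * A + 7) ≤ muv q * (12 * (q:ℝ) + 7) :=
      mul_le_mul_of_nonneg_left (by linarith) (le_of_lt hμ)
    nlinarith
  nlinarith [sq_nonneg (A - 1)]

set_option maxHeartbeats 1000000 in
lemma other_val {d : ℕ} (hd : 2 ≤ d) (q : ℕ) (σ : Fin d → Bool) (v : Bool)
    (j j'' : ℕ) (hjq : j < q) (hj''q : j'' < q) (hne : j'' ≠ j) (i : ℕ) (hi : i < d) :
    decide (0 ≤ dotv (wvec d q σ v j) (ptv d j'' i) + bval d q σ v j) = v := by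
  rw [val_formula hd q σ v j j'' i hi]
  have hsb : ∀ n, -1 ≤ snv d σ v n ∧ snv d σ v n ≤ 1 := by
    intro n; unfold snv; split_ifs <;> norm_num
  set s0 := snv d σ v 0 with hs0d
  set s1 := snv d σ v 1 with hs1d
  set si := snv d σ v i with hsid
  obtain ⟨h0l, h0r⟩ := hsb 0
  obtain ⟨h1l, h1r⟩ := hsb 1
  obtain ⟨hil, hir⟩ := hsb i
  rw [← hs0d] at h0l h0r
  rw [← hs1d] at h1l h1r
  rw [← hsid] at hil hir
  set Δ : ℝ := (j'':ℝ) - j with hΔd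
  clear_value s0 s1 si Δ
  have hΔ1 : 1 ≤ |Δ| := by
    rcases Nat.lt_or_ge j'' j with h | h
    · rw [abs_of_nonpos (by rw [hΔd]; simp [sub_nonpos]; exact_mod_cast h.le)]
      rw [hΔd]
      have : (j'':ℝ) + 1 ≤ j := by exact_mod_cast Nat.succ_le_of_lt h
      linarith
    · have hlt : j < j'' := lt_of_le_of_ne h (Ne.symm hne)
      rw [abs_of_nonneg (by rw [hΔd]; simp [sub_nonneg]; exact_mod_cast hlt.le)]
      have : (j:ℝ) + 1 ≤ j'' := by exact_mod_cast Nat.succ_le_of_lt hlt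
      rw [hΔd]; linarith
  have hΔq : |Δ| ≤ q := by
    have l1 : (j:ℝ) ≤ q := by exact_mod_cast hjq.le
    have l2 : (j'':ℝ) ≤ q := by exact_mod_cast hj''q.le
    have l3 : (0:ℝ) ≤ j := Nat.cast_nonneg j
    have l4 : (0:ℝ) ≤ j'' := Nat.cast_nonneg j''
    rw [abs_le]; constructor <;> [rw [hΔd]; rw [hΔd]] <;> linarith
  have hΔa := le_abs_self Δ
  have hΔb := neg_abs_le Δ
  have key1 : (0:ℝ) ≤ (12 - (8 * s1 - 4 * s0)) * (|Δ| - Δ) :=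
    mul_nonneg (by linarith) (by linarith)
  have key2 : (0:ℝ) ≤ (12 + (8 * s1 - 4 * s0)) * (|Δ| + Δ) :=
    mul_nonneg (by linarith) (by linarith)
  have hprod1 : -(12 * |Δ|) ≤ (8 * s1 - 4 * s0) * Δ := by nlinarith
  have hprod2 : (8 * s1 - 4 * s0) * Δ ≤ 12 * |Δ| := by nlinarith
  have hEb : |(8 * s1 - 4 * s0) * Δ + (if i = 1 then (8 * s1 - 4 * s0)/4 else 0)
      + (if 2 ≤ i then 2 * si - s0 else 0) + s0| ≤ 12 * |Δ| + 7 := by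
    rw [abs_le]
    constructor <;> split_ifs <;> linarith
  have hpos : 0 < Δ ^ 2 + (if i = 1 then Δ / 2 else 0)
      + muv q * ((8 * s1 - 4 * s0) * Δ + (if i = 1 then (8 * s1 - 4 * s0)/4 else 0)
          + (if 2 ≤ i then 2 * si - s0 else 0) + s0) := by
    apply core_pos q Δ _ _ hΔ1 hΔq
    · split_ifs <;> simp
    · exact hEb
  cases v
  · rw [if_neg (by simp), decide_eq_false_iff_not, not_le]
    nlinarith
  · rw [if_pos rfl, decide_eq_true_eq]
    nlinarith
lemma key_halfspace {d q : ℕ} (hd : 2 ≤ d) (σ : Fin d → Bool) (v : Bool) (j : Fin q) :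
    ∃ h ∈ halfspace d, (∀ i : Fin d, h (ptv d (j:ℕ) (i:ℕ)) = σ i) ∧
      ∀ j' : Fin q, j' ≠ j → ∀ i : Fin d, h (ptv d (j':ℕ) (i:ℕ)) = v := by
  refine ⟨fun x => decide (0 ≤ dotv (wvec d q σ v j) x + bval d q σ v j),
    mem_halfspace _ _, fun i => ?_, fun j' hne i => ?_⟩
  · have := own_val hd q σ v (j:ℕ) (i:ℕ) i.isLt
    simpa using this
  · exact other_val hd q σ v (j:ℕ) (j':ℕ) j.isLt j'.isLt
      (fun h => hne (Fin.val_injective h)) (i:ℕ) i.isLt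

/-- For all integers d, k, l ≥ 2 and any code matrix M ∈ ℝ^{k×l}: if there exists
a q-sensitive vector u for M (at least q coordinate flips of u change the decoded label), then
the Natarajan dimension of the ECOC class W^d_M built on halfspaces over ℝ^d is at least d·q. -/
theorem stmt16 (d k l q : ℕ) [NeZero k] (hd : 2 ≤ d) (hk : 2 ≤ k) (hl : 2 ≤ l)
    (M : Fin k → Fin l → ℝ) (u : Fin l → Bool)
    (hu : q ≤ (Finset.univ.filter (fun j : Fin l =>
      decode M u ≠ decode M (Function.update u j (!u j)))).card) :
    ∃ S : Finset (Fin d → ℝ), NShatters (ecocClass (halfspace d) M) ↑S ∧ d * q ≤ S.card := by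
  classical
  obtain ⟨J, hJsub, hJcard⟩ := Finset.exists_subset_card_eq hu
  set ι : Fin q → Fin l := fun a => (J.orderIsoOfFin hJcard a : Fin l) with hιdef
  have hιinj : Function.Injective ι := fun a b hab =>
    (J.orderIsoOfFin hJcard).injective (Subtype.ext hab)
  have hsens : ∀ a : Fin q,
      decode M u ≠ decode M (Function.update u (ι a) (!u (ι a))) := by
    intro a
    have hm : ι a ∈ J := (J.orderIsoOfFin hJcard a).2
    exact (Finset.mem_filter.mp (hJsub hm)).2
  have hP : Function.Injective (fun p : Fin q × Fin d => ptv d (p.1 : ℕ) (p.2 : ℕ)) := by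
    intro p p' hpp
    obtain ⟨h1, h2⟩ := ptv_inj hd p.2.isLt p'.2.isLt hpp
    exact Prod.ext (Fin.val_injective h1) (Fin.val_injective h2)
  refine ⟨Finset.image (fun p : Fin q × Fin d => ptv d (p.1 : ℕ) (p.2 : ℕ)) Finset.univ, ?_, ?_⟩
  swap
  · rw [Finset.card_image_of_injective _ hP, Finset.card_univ]
    simp [mul_comm]
  set f₂ : (Fin d → ℝ) → Fin k := fun x =>
    if h : ∃ p : Fin q × Fin d, ptv d (p.1 : ℕ) (p.2 : ℕ) = x then
      decode M (Function.update u (ι h.choose.1) (!u (ι h.choose.1)))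
    else decode M u with hf₂def
  have hf₂ : ∀ p : Fin q × Fin d,
      f₂ (ptv d (p.1 : ℕ) (p.2 : ℕ)) =
        decode M (Function.update u (ι p.1) (!u (ι p.1))) := by
    intro p
    have hex : ∃ p' : Fin q × Fin d,
        ptv d (p'.1 : ℕ) (p'.2 : ℕ) = ptv d (p.1 : ℕ) (p.2 : ℕ) := ⟨p, rfl⟩
    rw [hf₂def]
    simp only
    rw [dif_pos hex]
    have hch : hex.choose = p := hP hex.choose_spec
    rw [hch]
  refine ⟨fun _ => decode M u, f₂, ?_, ?_⟩
  · intro x hx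
    obtain ⟨p, -, rfl⟩ := Finset.mem_image.mp (by exact_mod_cast hx)
    rw [hf₂ p]
    exact hsens p.1
  · intro T hT
    have Hg : ∀ a : Fin q, ∃ h ∈ halfspace d,
        (∀ i : Fin d, h (ptv d (a : ℕ) (i : ℕ)) =
          (if ptv d (a : ℕ) (i : ℕ) ∈ T then u (ι a) else !u (ι a))) ∧
        ∀ a' : Fin q, a' ≠ a → ∀ i : Fin d, h (ptv d (a' : ℕ) (i : ℕ)) = u (ι a) := by
      intro a
      exact key_halfspace hd
        (fun i => if ptv d (a : ℕ) (i : ℕ) ∈ T then u (ι a) else !u (ι a)) (u (ι a)) a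
    choose hg hgmem hgown hgother using Hg
    set hfun : Fin l → (Fin d → ℝ) → Bool := fun c =>
      if hc : ∃ a : Fin q, ι a = c then hg hc.choose else fun _ => u c with hfundef
    have hbit : ∀ (a : Fin q) (i : Fin d),
        (fun c => hfun c (ptv d (a : ℕ) (i : ℕ))) =
          (if ptv d (a : ℕ) (i : ℕ) ∈ T then u
           else Function.update u (ι a) (!u (ι a))) := by
      intro a i
      funext c
      by_cases hc : ∃ a' : Fin q, ι a' = c
      · have hca : ι hc.choose = c := hc.choose_spec
        have hval : hfun c = hg hc.choose := by rw [hfundef]; simp only; rw [dif_pos hc]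
        rw [hval]
        by_cases haa : hc.choose = a
        · rw [haa, hgown a i]
          have hcia : c = ι a := by rw [← hca, haa]
          by_cases hxT : ptv d (a : ℕ) (i : ℕ) ∈ T
          · rw [if_pos hxT, if_pos hxT, hcia]
          · rw [if_neg hxT, if_neg hxT, hcia, Function.update_self]
        · rw [hgother hc.choose a (fun h => haa h.symm) i]
          have hcne : c ≠ ι a := by
            rw [← hca]
            exact fun h => haa (hιinj h)
          by_cases hxT : ptv d (a : ℕ) (i : ℕ) ∈ T
          · rw [if_pos hxT, hca]
          · rw [if_neg hxT, Function.update_of_ne hcne, hca]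
      · have hval : hfun c = fun _ => u c := by rw [hfundef]; simp only; rw [dif_neg hc]
        rw [hval]
        have hcne : c ≠ ι a := fun h => hc ⟨a, h.symm⟩
        by_cases hxT : ptv d (a : ℕ) (i : ℕ) ∈ T
        · rw [if_pos hxT]
        · rw [if_neg hxT, Function.update_of_ne hcne]
    refine ⟨fun x => decode M (fun c => hfun c x), ⟨hfun, fun c => ?_, rfl⟩, ?_, ?_⟩
    · rw [hfundef]
      simp only
      by_cases hc : ∃ a : Fin q, ι a = c
      · rw [dif_pos hc]; exact hgmem hc.choose
      · rw [dif_neg hc]; exact const_mem_halfspace (u c)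
    · intro x hxT
      obtain ⟨p, -, rfl⟩ := Finset.mem_image.mp (by exact_mod_cast hT hxT)
      show decode M (fun c => hfun c (ptv d (p.1 : ℕ) (p.2 : ℕ))) = decode M u
      rw [hbit p.1 p.2, if_pos hxT]
    · intro x hx
      obtain ⟨hxS, hxT⟩ := hx
      obtain ⟨p, -, rfl⟩ := Finset.mem_image.mp (by exact_mod_cast hxS)
      show decode M (fun c => hfun c (ptv d (p.1 : ℕ) (p.2 : ℕ))) = f₂ _
      rw [hbit p.1 p.2, if_neg hxT, hf₂ p]
end

section
/- For every binary code matrix M ∈ {±1}^{k×l} with k ≥ 2, there exists a vector u ∈ {±1}^l that is q-sensitive for M with q ≥ ⌈Δ(M)/2⌉, where Δ(M) = max_{i∈[k]} min_{j≠i} Δ_h(M[i], M[j]); in particular q ≥ δ(M)/2 where δ(M) = min_{i<j} Δ_h(M[i], M[j]). -/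
open MeasureTheory
open scoped ENNReal

section Stmt17Aux

open Classical

variable {k l : ℕ} [NeZero k]

set_option linter.unusedSectionVars false

noncomputable def score17 (M : Fin k → Fin l → ℝ) (i : Fin k) (u : Fin l → Bool) : ℝ :=
  ∑ j, M i j * (if u j then (1:ℝ) else -1)

noncomputable def Aset17 (M : Fin k → Fin l → ℝ) (p q : Fin k) (w : Fin l → Bool) :
    Finset (Fin l) :=
  Finset.univ.filter fun j => M p j ≠ M q j ∧ (if w j then (1:ℝ) else -1) = M p j

lemma mem_Aset17 {M : Fin k → Fin l → ℝ} {p q : Fin k} {w : Fin l → Bool} {j : Fin l} :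
    j ∈ Aset17 M p q w ↔ (M p j ≠ M q j ∧ (if w j then (1:ℝ) else -1) = M p j) := by
  simp [Aset17]

lemma argmaxFin_isMax (f : Fin k → ℝ) (j : Fin k) : f j ≤ f (argmaxFin f) := by
  have h : argmaxFin f ∈ Finset.univ.filter fun i => ∀ j, f j ≤ f i := Finset.min'_mem _ _
  exact (Finset.mem_filter.mp h).2 j

lemma decode17_def (M : Fin k → Fin l → ℝ) (w : Fin l → Bool) :
    decode M w = argmaxFin (fun i => score17 M i w) := rfl

lemma score17_le_decode (M : Fin k → Fin l → ℝ) (w : Fin l → Bool) (m : Fin k) :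
    score17 M m w ≤ score17 M (decode M w) w := by
  rw [decode17_def]; exact argmaxFin_isMax (fun i => score17 M i w) m

lemma decode17_ne (M : Fin k → Fin l → ℝ) (w : Fin l → Bool) {i : Fin k} (m : Fin k)
    (h : score17 M i w < score17 M m w) : decode M w ≠ i := by
  intro he
  have := score17_le_decode M w m
  rw [he] at this
  linarith

lemma decode17_eq (M : Fin k → Fin l → ℝ) (w : Fin l → Bool) {i : Fin k}
    (h : ∀ j, j ≠ i → score17 M j w < score17 M i w) : decode M w = i := by
  by_contra hne
  have h1 := h _ hne
  have h2 := score17_le_decode M w i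
  linarith

lemma score17_update (M : Fin k → Fin l → ℝ) (i : Fin k) (w : Fin l → Bool) (a : Fin l) :
    score17 M i (Function.update w a (!w a)) =
      score17 M i w - 2 * (M i a * (if w a then (1:ℝ) else -1)) := by
  unfold score17
  rw [Finset.sum_eq_sum_sdiff_singleton_add (Finset.mem_univ a),
      Finset.sum_eq_sum_sdiff_singleton_add (Finset.mem_univ a)
        (fun j => M i j * (if w j then (1:ℝ) else -1))]
  have h1 : ∀ j ∈ Finset.univ \ {a},
      M i j * (if Function.update w a (!w a) j then (1:ℝ) else -1)
        = M i j * (if w j then (1:ℝ) else -1) := by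
    intro j hj
    rw [Function.update_of_ne (by simpa using (Finset.mem_sdiff.mp hj).2)]
  rw [Finset.sum_congr rfl h1, Function.update_self]
  cases hw : w a <;> simp <;> ring

lemma score17_sub (M : Fin k → Fin l → ℝ) (hM : ∀ i j, M i j = 1 ∨ M i j = -1)
    (p q : Fin k) (w : Fin l → Bool) :
    score17 M p w - score17 M q w =
      2 * ((Aset17 M p q w).card : ℝ) - 2 * ((Aset17 M q p w).card : ℝ) := by
  unfold score17 Aset17
  rw [← Finset.sum_sub_distrib]
  have key : ∀ j, M p j * (if w j then (1:ℝ) else -1) - M q j * (if w j then (1:ℝ) else -1)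
      = (if (M p j ≠ M q j ∧ (if w j then (1:ℝ) else -1) = M p j) then (2:ℝ) else 0)
        - (if (M q j ≠ M p j ∧ (if w j then (1:ℝ) else -1) = M q j) then (2:ℝ) else 0) := by
    intro j
    rcases hM p j with h1 | h1 <;> rcases hM q j with h2 | h2 <;> cases hw : w j <;>
      simp [h1, h2, hw] <;> norm_num
  rw [Finset.sum_congr rfl (fun j _ => key j), Finset.sum_sub_distrib,
      Finset.sum_ite, Finset.sum_const, Finset.sum_const_zero, Finset.sum_ite,
      Finset.sum_const, Finset.sum_const_zero]
  simp [mul_comm]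

lemma cardAB17 (M : Fin k → Fin l → ℝ) (hM : ∀ i j, M i j = 1 ∨ M i j = -1)
    (p q : Fin k) (w : Fin l → Bool) :
    (Aset17 M p q w).card + (Aset17 M q p w).card = hammingDist (M p) (M q) := by
  classical
  unfold Aset17
  rw [← Finset.card_union_of_disjoint]
  · have huni : (Finset.univ.filter fun j =>
        M p j ≠ M q j ∧ (if w j then (1:ℝ) else -1) = M p j)
      ∪ (Finset.univ.filter fun j =>
        M q j ≠ M p j ∧ (if w j then (1:ℝ) else -1) = M q j)
      = Finset.univ.filter fun j => M p j ≠ M q j := by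
      ext j
      simp only [Finset.mem_union, Finset.mem_filter, Finset.mem_univ, true_and]
      constructor
      · rintro (⟨h, -⟩ | ⟨h, -⟩)
        · exact h
        · exact fun he => h he.symm
      · intro h
        rcases hM p j with h1 | h1 <;> rcases hM q j with h2 | h2 <;> cases hw : w j <;>
          simp_all <;> norm_num
    rw [huni, hammingDist]
  · rw [Finset.disjoint_filter]
    rintro j - ⟨hne, he⟩ ⟨-, he'⟩
    exact hne (he ▸ he' ▸ rfl)

lemma prodvals17 {x y s : ℝ} (hx : x = 1 ∨ x = -1) (hy : y = 1 ∨ y = -1)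
    (hne : x ≠ y) (hs : s = x) : x * s = 1 ∧ y * s = -1 := by
  subst hs
  rcases hx with h|h <;> rcases hy with h'|h' <;> simp_all <;> norm_num

lemma prodbnd17 {x s : ℝ} (hx : x = 1 ∨ x = -1) (hs : s = 1 ∨ s = -1) :
    x * s ≤ 1 ∧ -1 ≤ x * s := by
  rcases hx with h|h <;> rcases hs with h'|h' <;> simp_all <;> norm_num

lemma flip_T17 (M : Fin k → Fin l → ℝ) (hM : ∀ i j, M i j = 1 ∨ M i j = -1)
    (p q : Fin k) (w : Fin l → Bool) {a : Fin l} (ha : a ∈ Aset17 M p q w) :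
    score17 M p (Function.update w a (!w a)) - score17 M q (Function.update w a (!w a))
      = score17 M p w - score17 M q w - 4 := by
  obtain ⟨h1, h2⟩ := mem_Aset17.mp ha
  obtain ⟨hp, hq⟩ := prodvals17 (hM p a) (hM q a) h1 h2
  rw [score17_update, score17_update]
  linarith

lemma flip_T_ge17 (M : Fin k → Fin l → ℝ) (hM : ∀ i j, M i j = 1 ∨ M i j = -1)
    (p q : Fin k) (w : Fin l → Bool) (a : Fin l) :
    score17 M p w - score17 M q w - 4 ≤
      score17 M p (Function.update w a (!w a)) - score17 M q (Function.update w a (!w a)) := by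
  have hs : (if w a then (1:ℝ) else -1) = 1 ∨ (if w a then (1:ℝ) else -1) = -1 := by
    cases w a <;> simp
  obtain ⟨hp1, hp2⟩ := prodbnd17 (hM p a) hs
  obtain ⟨hq1, hq2⟩ := prodbnd17 (hM q a) hs
  rw [score17_update, score17_update]
  linarith

end Stmt17Aux

/-- For every binary code matrix M ∈ {±1}^{k×l} with k ≥ 2 there exists a vector
u ∈ {±1}^l that is q-sensitive for M with q ≥ ⌈Δ(M)/2⌉, where
Δ(M) = max_i min_{j≠i} Δ_h(M[i],M[j]); in particular q ≥ δ(M)/2 with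
δ(M) = min_{i<j} Δ_h(M[i],M[j]). -/
theorem stmt17 (k l : ℕ) [NeZero k] (hk : 2 ≤ k) (M : Fin k → Fin l → ℝ)
    (hM : ∀ i j, M i j = 1 ∨ M i j = -1) :
    ∃ u : Fin l → Bool,
      ((Finset.univ.sup (fun i : Fin k =>
          sInf { n : ℕ | ∃ j : Fin k, j ≠ i ∧ n = hammingDist (M i) (M j) }) + 1) / 2 ≤
        (Finset.univ.filter (fun j : Fin l =>
          decode M u ≠ decode M (Function.update u j (!u j)))).card) ∧
      (((sInf { n : ℕ | ∃ i j : Fin k, i < j ∧ n = hammingDist (M i) (M j) } : ℕ) : ℝ) / 2 ≤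
        ((Finset.univ.filter (fun j : Fin l =>
          decode M u ≠ decode M (Function.update u j (!u j)))).card : ℝ)) := by
  classical
  obtain ⟨istar, -, hsup⟩ := Finset.exists_mem_eq_sup (Finset.univ : Finset (Fin k))
    ⟨⟨0, Nat.pos_of_ne_zero (NeZero.ne k)⟩, Finset.mem_univ _⟩
    (fun i : Fin k => sInf { n : ℕ | ∃ j : Fin k, j ≠ i ∧ n = hammingDist (M i) (M j) })
  have hsup' : (Finset.univ.sup (fun i : Fin k =>
      sInf { n : ℕ | ∃ j : Fin k, j ≠ i ∧ n = hammingDist (M i) (M j) }))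
      = sInf { n : ℕ | ∃ j : Fin k, j ≠ istar ∧ n = hammingDist (M istar) (M j) } := by
    rw [hsup]
  set r := sInf { n : ℕ | ∃ j : Fin k, j ≠ istar ∧ n = hammingDist (M istar) (M j) } with hrdef
  haveI : Nontrivial (Fin k) := Fin.nontrivial_iff_two_le.mpr hk
  obtain ⟨j1, hj1⟩ := exists_ne istar
  have hSne : { n : ℕ | ∃ j : Fin k, j ≠ istar ∧ n = hammingDist (M istar) (M j) }.Nonempty :=
    ⟨_, j1, hj1, rfl⟩
  obtain ⟨j0, hj0ne, hj0⟩ := Nat.sInf_mem hSne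
  have hrle : ∀ m : Fin k, m ≠ istar → r ≤ hammingDist (M istar) (M m) := fun m hm =>
    Nat.sInf_le ⟨m, hm, rfl⟩
  have hδr : sInf { n : ℕ | ∃ i j : Fin k, i < j ∧ n = hammingDist (M i) (M j) } ≤ r := by
    rcases lt_or_gt_of_ne (Ne.symm hj0ne) with h | h
    · exact Nat.sInf_le ⟨istar, j0, h, hj0⟩
    · exact Nat.sInf_le ⟨j0, istar, h, by rw [hammingDist_comm]; exact hj0⟩
  suffices hmain : ∃ u : Fin l → Bool,
      r ≤ 2 * (Finset.univ.filter (fun j : Fin l =>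
        decode M u ≠ decode M (Function.update u j (!u j)))).card by
    obtain ⟨u, hu⟩ := hmain
    refine ⟨u, ?_, ?_⟩
    · rw [hsup']; omega
    · have h2 : sInf { n : ℕ | ∃ i j : Fin k, i < j ∧ n = hammingDist (M i) (M j) }
          ≤ 2 * (Finset.univ.filter (fun j : Fin l =>
            decode M u ≠ decode M (Function.update u j (!u j)))).card := hδr.trans hu
      have h3 : ((sInf { n : ℕ | ∃ i j : Fin k, i < j ∧ n = hammingDist (M i) (M j) } : ℕ) : ℝ)
          ≤ 2 * ((Finset.univ.filter (fun j : Fin l =>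
            decode M u ≠ decode M (Function.update u j (!u j)))).card : ℝ) := by
        exact_mod_cast h2
      linarith
  rcases Nat.eq_zero_or_pos r with hr0 | hrpos
  · exact ⟨fun _ => true, by omega⟩
  -- base point u0 : sign pattern of row istar
  set u0 : Fin l → Bool := fun j => if M istar j = 1 then true else false with hu0
  have hu0sgn : ∀ j, (if u0 j then (1:ℝ) else -1) = M istar j := by
    intro j
    rcases hM istar j with h | h <;> simp [hu0, h] <;> norm_num
  have hdecu0 : decode M u0 = istar := by
    apply decode17_eq
    intro q hq
    have hsub := score17_sub M hM istar q u0
    have hcard := cardAB17 M hM istar q u0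
    have hB : Aset17 M q istar u0 = ∅ := by
      rw [Finset.eq_empty_iff_forall_notMem]
      intro j hj
      obtain ⟨hne, he⟩ := mem_Aset17.mp hj
      rw [hu0sgn j] at he
      exact hne he.symm
    have hd := hrle q hq
    rw [hB, Finset.card_empty] at hsub hcard
    have hA1 : 1 ≤ (Aset17 M istar q u0).card := by omega
    have hA1' : (1:ℝ) ≤ ((Aset17 M istar q u0).card : ℝ) := by exact_mod_cast hA1
    push_cast at hsub
    linarith
  -- point v : sign pattern of row j0, decodes away from istar
  set v : Fin l → Bool := fun j => if M j0 j = 1 then true else false with hv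
  have hvsgn : ∀ j, (if v j then (1:ℝ) else -1) = M j0 j := by
    intro j
    rcases hM j0 j with h | h <;> simp [hv, h] <;> norm_num
  have hdecv : decode M v ≠ istar := by
    apply decode17_ne M v j0
    have hsub := score17_sub M hM istar j0 v
    have hcard := cardAB17 M hM istar j0 v
    have hA : Aset17 M istar j0 v = ∅ := by
      rw [Finset.eq_empty_iff_forall_notMem]
      intro j hj
      obtain ⟨hne, he⟩ := mem_Aset17.mp hj
      rw [hvsgn j] at he
      exact hne he.symm
    rw [hA, Finset.card_empty] at hsub hcard
    have hB1 : 1 ≤ (Aset17 M j0 istar v).card := by omega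
    have hB1' : (1:ℝ) ≤ ((Aset17 M j0 istar v).card : ℝ) := by exact_mod_cast hB1
    push_cast at hsub
    linarith
  -- minimize hamming distance to u0 over points decoding away from istar
  obtain ⟨w, hwF, hwmin⟩ := Finset.exists_min_image
    (Finset.univ.filter fun w : Fin l → Bool => decode M w ≠ istar)
    (fun w => hammingDist u0 w)
    ⟨v, Finset.mem_filter.mpr ⟨Finset.mem_univ _, hdecv⟩⟩
  have hwne : decode M w ≠ istar := (Finset.mem_filter.mp hwF).2
  have hwu0 : w ≠ u0 := fun h => hwne (h ▸ hdecu0)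
  obtain ⟨a, ha⟩ : ∃ a, u0 a ≠ w a := by
    by_contra hc
    push_neg at hc
    exact hwu0 (funext fun j => (hc j).symm)
  set wp := Function.update w a (!w a) with hwp
  have hdist : hammingDist u0 wp < hammingDist u0 w := by
    have hmem : a ∈ Finset.univ.filter fun j => u0 j ≠ w j := by
      simp [ha]
    have hset : (Finset.univ.filter fun j => u0 j ≠ wp j)
        = (Finset.univ.filter fun j => u0 j ≠ w j).erase a := by
      ext j
      by_cases hja : j = a
      · subst hja
        simp only [Finset.mem_filter, Finset.mem_univ, true_and, Finset.mem_erase, ne_eq,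
          not_true_eq_false, false_and, iff_false, hwp, Function.update_self]
        revert ha
        cases u0 j <;> cases w j <;> simp
      · simp [hwp, Function.update_of_ne hja, hja]
    have hpos : 0 < (Finset.univ.filter fun j => u0 j ≠ w j).card :=
      Finset.card_pos.mpr ⟨a, hmem⟩
    show (Finset.univ.filter fun j => u0 j ≠ wp j).card
        < (Finset.univ.filter fun j => u0 j ≠ w j).card
    rw [hset, Finset.card_erase_of_mem hmem]
    omega
  have hdecwp : decode M wp = istar := by
    by_contra hne
    have := hwmin wp (Finset.mem_filter.mpr ⟨Finset.mem_univ _, hne⟩)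
    omega
  set m := decode M w with hm
  have hmne : m ≠ istar := hwne
  have hd : r ≤ hammingDist (M istar) (M m) := hrle m hmne
  have hsubp := score17_sub M hM istar m wp
  have hcardp := cardAB17 M hM istar m wp
  have hTp : score17 M m wp ≤ score17 M istar wp := by
    have := score17_le_decode M wp m
    rwa [hdecwp] at this
  have hBpAp : (Aset17 M m istar wp).card ≤ (Aset17 M istar m wp).card := by
    have : ((Aset17 M m istar wp).card : ℝ) ≤ ((Aset17 M istar m wp).card : ℝ) := by
      linarith
    exact_mod_cast this
  by_cases hAB : (Aset17 M istar m wp).card ≤ (Aset17 M m istar wp).card + 1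
  · -- case 1 : use wp
    refine ⟨wp, ?_⟩
    have hsubset : Aset17 M istar m wp ⊆ Finset.univ.filter (fun j : Fin l =>
        decode M wp ≠ decode M (Function.update wp j (!wp j))) := by
      intro j hj
      rw [Finset.mem_filter]
      refine ⟨Finset.mem_univ _, ?_⟩
      rw [hdecwp]
      have hflip := flip_T17 M hM istar m wp hj
      have hABr : ((Aset17 M istar m wp).card : ℝ)
          ≤ ((Aset17 M m istar wp).card : ℝ) + 1 := by exact_mod_cast hAB
      have hlt : score17 M istar (Function.update wp j (!wp j))
          < score17 M m (Function.update wp j (!wp j)) := by linarith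
      exact (decode17_ne M _ m hlt).symm
    have hcard_le := Finset.card_le_card hsubset
    omega
  · -- case 2 : use w
    push_neg at hAB
    refine ⟨w, ?_⟩
    have hw_eq : w = Function.update wp a (!wp a) := by
      funext j
      by_cases hja : j = a
      · subst hja
        simp [hwp]
      · simp [hwp, Function.update_of_ne hja]
    have hTw : score17 M istar w ≤ score17 M m w := by
      have := score17_le_decode M w istar
      rwa [← hm] at this
    have hge := flip_T_ge17 M hM istar m wp a
    rw [← hw_eq] at hge
    have hABr : ((Aset17 M m istar wp).card : ℝ) + 2
        ≤ ((Aset17 M istar m wp).card : ℝ) := by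
      have : (Aset17 M m istar wp).card + 2 ≤ (Aset17 M istar m wp).card := hAB
      exact_mod_cast this
    have hsubw := score17_sub M hM istar m w
    have hcardw := cardAB17 M hM istar m w
    have hTw0 : score17 M istar w - score17 M m w = 0 := by linarith
    have hAwBw : (Aset17 M istar m w).card = (Aset17 M m istar w).card := by
      have : ((Aset17 M istar m w).card : ℝ) = ((Aset17 M m istar w).card : ℝ) := by
        linarith
      exact_mod_cast this
    have hsubset : Aset17 M m istar w ⊆ Finset.univ.filter (fun j : Fin l =>
        decode M w ≠ decode M (Function.update w j (!w j))) := by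
      intro j hj
      rw [Finset.mem_filter]
      refine ⟨Finset.mem_univ _, ?_⟩
      have hflip := flip_T17 M hM m istar w hj
      have hlt : score17 M m (Function.update w j (!w j))
          < score17 M istar (Function.update w j (!w j)) := by linarith
      have hne := decode17_ne M (Function.update w j (!w j)) istar hlt
      rw [← hm]
      exact fun h => hne h.symm
    have hcard_le := Finset.card_le_card hsubset
    omega
end

section
/- For all integers d ≥ 2 and l ≥ 2, the class of halfspaces W^d over ℝ^d is richer than both F^l and G^l: there exists a map ι : [d]×[l] → ℝ^d such that every f ∈ F^l equals h ∘ ι for some halfspace h ∈ W^d, and there exists a map ι' : [d]×[l] → ℝ^d such that every g ∈ G^l equals h ∘ ι' for some halfspace h ∈ W^d. -/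
open MeasureTheory
open scoped ENNReal

/-- The class F^l of {±1}-valued functions on [d]×[l] given by f^{i,j}(u,v) = f(u) if v = i and
j otherwise (`true` ↔ +1). -/
def Fclass (d l : ℕ) : Set (Fin d × Fin l → Bool) :=
  { F | ∃ (f : Fin d → Bool) (i : Fin l) (j : Bool),
      F = fun p => if p.2 = i then f p.1 else j }

/-- The class G^l of {±1}-valued functions on [d]×[l] given by g^{i,j}(u,v) = g(u) if v = i,
j if v > i, and −j if v < i (`true` ↔ +1). -/
def Gclass (d l : ℕ) : Set (Fin d × Fin l → Bool) :=
  { G | ∃ (g : Fin d → Bool) (i : Fin l) (j : Bool),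
      G = fun p => if p.2 = i then g p.1 else if i < p.2 then j else !j }

lemma sum_ite_mul {d : ℕ} (g : Fin d → ℝ) (a : Fin d) (c : ℝ) :
    (∑ m, g m * (if m = a then c else 0)) = g a * c := by
  rw [Finset.sum_eq_single a]
  · simp
  · intro m _ hm; simp [hm]
  · intro h; exact absurd (Finset.mem_univ a) h


lemma sum_snoc_aug {d : ℕ} (w' : Fin d → ℝ) (b : ℝ) (x : Fin d → ℝ) :
    (∑ k, (Fin.snoc w' b : Fin (d+1) → ℝ) k * aug x k) = (∑ m, w' m * x m) + b := by
  rw [Fin.sum_univ_castSucc]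
  simp [aug]

lemma keypos (Δ c e t : ℝ) (hΔ : 1 ≤ Δ ∨ Δ ≤ -1) (hc : -2 ≤ c ∧ c ≤ 2)
    (he : -1 ≤ e ∧ e ≤ 1) (ht : t = 0 ∨ t = 5/2*Δ) :
    0 < 5*Δ^2 + t + c*Δ + e/4 := by
  obtain ⟨hc1, hc2⟩ := hc; obtain ⟨he1, he2⟩ := he
  rcases ht with rfl | rfl <;> rcases hΔ with h | h
  · nlinarith [mul_nonneg (by linarith : (0:ℝ) ≤ 2 + c) (by linarith : (0:ℝ) ≤ Δ - 1), sq_nonneg (Δ - 1)]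
  · nlinarith [mul_nonneg (by linarith : (0:ℝ) ≤ 2 - c) (by linarith : (0:ℝ) ≤ -1 - Δ), sq_nonneg (Δ + 1)]
  · nlinarith [mul_nonneg (by linarith : (0:ℝ) ≤ 2 + c) (by linarith : (0:ℝ) ≤ Δ - 1), sq_nonneg (Δ - 1)]
  · nlinarith [mul_nonneg (by linarith : (0:ℝ) ≤ 2 - c) (by linarith : (0:ℝ) ≤ -1 - Δ), sq_nonneg (Δ + 1)]

lemma keyneg (Δ c e t : ℝ) (hΔ : 1 ≤ Δ ∨ Δ ≤ -1) (hc : -2 ≤ c ∧ c ≤ 2)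
    (he : -1 ≤ e ∧ e ≤ 1) (ht : t = 0 ∨ t = -5/2*Δ) :
    -5*Δ^2 + t + c*Δ + e/4 < 0 := by
  have h2 : -t = 0 ∨ -t = 5/2*Δ := by
    rcases ht with rfl | rfl
    · left; ring
    · right; ring
  have := keypos Δ (-c) (-e) (-t) hΔ ⟨by linarith, by linarith⟩ ⟨by linarith, by linarith⟩ h2
  linarith [this]

set_option linter.unusedVariables false in
lemma stmt18_Fpart (d l : ℕ) (hd : 2 ≤ d) (hl : 2 ≤ l) :
    ∃ ι : Fin d × Fin l → (Fin d → ℝ),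
      ∀ F ∈ Fclass d l, ∃ h ∈ halfspace d, F = h ∘ ι := by
  have h0 : 0 < d := by omega
  have h1 : 1 < d := by omega
  refine ⟨fun p m =>
      ((p.2:ℕ):ℝ) * (if m = ⟨0, h0⟩ then 1 else 0)
      + ((p.2:ℕ):ℝ)^2 * (if m = ⟨1, h1⟩ then 1 else 0)
      + (1/4) * (if (p.1:ℕ) = 0 then
            ((if m = ⟨0, h0⟩ then (1:ℝ) else 0) + (if m = ⟨1, h1⟩ then 2*((p.2:ℕ):ℝ) else 0))
          else if (p.1:ℕ) = 1 then 0
          else (if m = p.1 then 1 else 0)), ?_⟩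
  rintro F ⟨f, i, j, rfl⟩
  classical
  set m0 : Fin d := ⟨0, h0⟩ with hm0
  set m1 : Fin d := ⟨1, h1⟩ with hm1
  set fr : Fin d → ℝ := fun u => if f u then 1 else -1 with hfrdef
  set A : ℝ := if j then 5 else -5 with hAdef
  set w' : Fin d → ℝ := fun m =>
    if m = m0 then -2*A*((i:ℕ):ℝ) + fr m0 - fr m1 else if m = m1 then A else fr m - fr m1
    with hw'
  set b : ℝ := A*((i:ℕ):ℝ)^2 - (fr m0 - fr m1)*((i:ℕ):ℝ) + fr m1/4 with hb
  have hm01 : m0 ≠ m1 := by simp [hm0, hm1, Fin.ext_iff]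
  have hwm0 : w' m0 = -2*A*((i:ℕ):ℝ) + fr m0 - fr m1 := by simp [hw']
  have hwm1 : w' m1 = A := by simp [hw', hm01.symm]
  refine ⟨_, ⟨Fin.snoc w' b, rfl⟩, ?_⟩
  funext p
  obtain ⟨u, v⟩ := p
  simp only [Function.comp_apply]
  have hsum : (∑ k, (Fin.snoc w' b : Fin (d+1) → ℝ) k *
        aug (fun m =>
          ((v:ℕ):ℝ) * (if m = m0 then 1 else 0)
          + ((v:ℕ):ℝ)^2 * (if m = m1 then 1 else 0)
          + (1/4) * (if (u:ℕ) = 0 then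
                ((if m = m0 then (1:ℝ) else 0) + (if m = m1 then 2*((v:ℕ):ℝ) else 0))
              else if (u:ℕ) = 1 then 0
              else (if m = u then 1 else 0))) k)
      = A*(((v:ℕ):ℝ) - ((i:ℕ):ℝ))^2
        + (if (u:ℕ) = 0 then A/2*(((v:ℕ):ℝ) - ((i:ℕ):ℝ)) else 0)
        + (fr m0 - fr m1)*(((v:ℕ):ℝ) - ((i:ℕ):ℝ)) + fr u/4 := by
    rw [sum_snoc_aug]
    by_cases hu0 : (u:ℕ) = 0
    · have hum0 : u = m0 := by apply Fin.ext; simp [hm0, hu0]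
      rw [hum0]
      simp only [hu0, show ((m0:ℕ)) = 0 from rfl, eq_self_iff_true, if_true]
      simp only [mul_add, mul_ite, mul_one, mul_zero, Finset.sum_add_distrib,
        Finset.sum_ite_eq', Finset.mem_univ, if_true, Finset.sum_const_zero]
      rw [hwm0, hwm1, hb]
      ring
    · by_cases hu1 : (u:ℕ) = 1
      · have hum1 : u = m1 := by apply Fin.ext; simp [hm1, hu1]
        simp only [hu0, if_false]
        simp only [hu1, eq_self_iff_true, if_true]
        rw [hum1]
        simp only [mul_add, mul_ite, mul_one, mul_zero, Finset.sum_add_distrib,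
          Finset.sum_ite_eq', Finset.mem_univ, if_true, Finset.sum_const_zero]
        rw [hwm0, hwm1, hb]
        ring
      · have h2 : u ≠ m0 := by simp [hm0, Fin.ext_iff]; omega
        have h3 : u ≠ m1 := by simp [hm1, Fin.ext_iff]; omega
        have hwu : w' u = fr u - fr m1 := by simp [hw', h2, h3]
        simp only [hu0, hu1, if_false]
        simp only [mul_add, mul_ite, mul_one, mul_zero, Finset.sum_add_distrib,
          Finset.sum_ite_eq', Finset.mem_univ, if_true, Finset.sum_const_zero]
        rw [hwm0, hwm1, hwu, hb]
        ring
  rw [hsum]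
  have hfr : ∀ x : Fin d, fr x = 1 ∨ fr x = -1 := by
    intro x; rw [hfrdef]; by_cases h : f x <;> simp [h]
  have hfrb : ∀ x : Fin d, -1 ≤ fr x ∧ fr x ≤ 1 := by
    intro x; rcases hfr x with h | h <;> rw [h] <;> norm_num
  have hcb : -2 ≤ fr m0 - fr m1 ∧ fr m0 - fr m1 ≤ 2 :=
    ⟨by linarith [(hfrb m0).1, (hfrb m1).2], by linarith [(hfrb m0).2, (hfrb m1).1]⟩
  by_cases hvi : v = i
  · subst hvi
    rw [if_pos rfl]
    have hz : ((v:ℕ):ℝ) - ((v:ℕ):ℝ) = 0 := sub_self _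
    rw [hz]
    by_cases hfu : f u
    · have hfru : fr u = 1 := by simp [hfrdef, hfu]
      rw [hfu, hfru, eq_comm, decide_eq_true_eq]
      norm_num
    · rw [Bool.not_eq_true] at hfu
      have hfru : fr u = -1 := by simp [hfrdef, hfu]
      rw [hfu, hfru, eq_comm, decide_eq_false_iff_not, not_le]
      rcases ite_eq_or_eq ((u:ℕ) = 0) (A/2*(0:ℝ)) (0:ℝ) with h | h <;> rw [h] <;> nlinarith []
  · have hne : (v:ℕ) ≠ (i:ℕ) := fun h => hvi (Fin.ext h)
    rw [if_neg hvi]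
    have hd1 : 1 ≤ ((v:ℕ):ℝ) - ((i:ℕ):ℝ) ∨ ((v:ℕ):ℝ) - ((i:ℕ):ℝ) ≤ -1 := by
      rcases lt_or_gt_of_ne hne with h | h
      · right
        have : ((v:ℕ):ℝ) + 1 ≤ ((i:ℕ):ℝ) := by exact_mod_cast h
        linarith
      · left
        have : ((i:ℕ):ℝ) + 1 ≤ ((v:ℕ):ℝ) := by exact_mod_cast h
        linarith
    by_cases hj : j
    · have hA : A = 5 := by simp [hAdef, hj]
      rw [hj, hA, eq_comm, decide_eq_true_eq]
      have ht : (if (u:ℕ) = 0 then (5:ℝ)/2*(((v:ℕ):ℝ) - ((i:ℕ):ℝ)) else 0) = 0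
          ∨ (if (u:ℕ) = 0 then (5:ℝ)/2*(((v:ℕ):ℝ) - ((i:ℕ):ℝ)) else 0)
            = 5/2*(((v:ℕ):ℝ) - ((i:ℕ):ℝ)) := by
        by_cases hu0 : (u:ℕ) = 0
        · right; rw [if_pos hu0]
        · left; rw [if_neg hu0]
      exact le_of_lt (keypos _ _ _ _ hd1 hcb (hfrb u) ht)
    · have hA : A = -5 := by simp [hAdef, hj]
      rw [Bool.not_eq_true] at hj
      rw [hj, hA, eq_comm, decide_eq_false_iff_not, not_le]
      have ht : (if (u:ℕ) = 0 then (-5:ℝ)/2*(((v:ℕ):ℝ) - ((i:ℕ):ℝ)) else 0) = 0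
          ∨ (if (u:ℕ) = 0 then (-5:ℝ)/2*(((v:ℕ):ℝ) - ((i:ℕ):ℝ)) else 0)
            = -5/2*(((v:ℕ):ℝ) - ((i:ℕ):ℝ)) := by
        by_cases hu0 : (u:ℕ) = 0
        · right; rw [if_pos hu0]
        · left; rw [if_neg hu0]
      exact keyneg _ _ _ _ hd1 hcb (hfrb u) ht

set_option linter.unusedVariables false in
lemma stmt18_Gpart (d l : ℕ) (hd : 2 ≤ d) (hl : 2 ≤ l) :
    ∃ ι' : Fin d × Fin l → (Fin d → ℝ),
      ∀ G ∈ Gclass d l, ∃ h ∈ halfspace d, G = h ∘ ι' := by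
  refine ⟨fun p m => (if m = p.1 then 1 else 0) + ((p.2 : ℕ) : ℝ), ?_⟩
  rintro G ⟨g, i, j, rfl⟩
  classical
  set gr : Fin d → ℝ := fun u => if g u then 1 else -1 with hgr
  set jr : ℝ := if j then 1 else -1 with hjr
  set S : ℝ := ∑ m, gr m with hS
  set μ : ℝ := (2*jr - S)/d with hμ
  refine ⟨_, ⟨Fin.snoc (fun m => gr m + μ) (-2*jr*((i:ℕ):ℝ) - μ), rfl⟩, ?_⟩
  funext p
  obtain ⟨u, v⟩ := p
  simp only [Function.comp_apply]
  have hsum : (∑ k, (Fin.snoc (fun m => gr m + μ) (-2*jr*((i:ℕ):ℝ) - μ) : Fin (d+1) → ℝ) k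
        * aug (fun m => (if m = u then (1:ℝ) else 0) + ((v:ℕ):ℝ)) k)
      = gr u + 2*jr*(((v:ℕ):ℝ) - ((i:ℕ):ℝ)) := by
    rw [sum_snoc_aug]
    have e1 : (∑ m, (gr m + μ) * ((if m = u then (1:ℝ) else 0) + ((v:ℕ):ℝ)))
        = (∑ m, (fun m => gr m + μ) m * (if m = u then (1:ℝ) else 0))
          + (∑ m, (gr m + μ) * ((v:ℕ):ℝ)) := by
      rw [← Finset.sum_add_distrib]
      exact Finset.sum_congr rfl (fun m _ => by ring)
    rw [e1, sum_ite_mul (fun m => gr m + μ) u 1]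
    have h2 : (∑ m : Fin d, (gr m + μ) * ((v:ℕ):ℝ)) = (S + d*μ)*((v:ℕ):ℝ) := by
      rw [← Finset.sum_mul]
      congr 1
      rw [Finset.sum_add_distrib, Finset.sum_const, Finset.card_univ, Fintype.card_fin]
      simp [hS]
    rw [h2]
    have hd0 : (d:ℝ) ≠ 0 := Nat.cast_ne_zero.mpr (by omega)
    have h3 : S + d*μ = 2*jr := by
      rw [hμ]; field_simp; ring
    rw [h3]; ring
  rw [hsum]
  have hgru : gr u = 1 ∨ gr u = -1 := by
    rw [hgr]; by_cases h : g u <;> simp [h]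
  by_cases hvi : v = i
  · subst hvi
    simp only [if_pos rfl, sub_self, mul_zero, add_zero]
    by_cases h : g u <;> simp [hgr, h]
  · have hne : (v:ℕ) ≠ (i:ℕ) := fun h => hvi (Fin.ext h)
    rw [if_neg hvi]
    have hjrv : jr = 1 ∨ jr = -1 := by
      rw [hjr]; by_cases h : j <;> simp [h]
    rcases lt_or_gt_of_ne hne with hlt | hgt
    · have hiv : ¬ (i < v) := by
        rw [Fin.lt_def]; omega
      rw [if_neg hiv]
      have h1 : ((v:ℕ):ℝ) + 1 ≤ ((i:ℕ):ℝ) := by exact_mod_cast hlt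
      by_cases hj : j
      · have hj1 : jr = 1 := by simp [hjr, hj]
        simp only [hj, Bool.not_true]
        rw [eq_comm, decide_eq_false_iff_not, not_le, hj1]
        rcases hgru with h | h <;> rw [h] <;> nlinarith
      · have hj1 : jr = -1 := by simp [hjr, hj]
        simp only [hj, Bool.not_false]
        rw [eq_comm, decide_eq_true_eq, hj1]
        rcases hgru with h | h <;> rw [h] <;> nlinarith
    · have hiv : i < v := by rw [Fin.lt_def]; omega
      rw [if_pos hiv]
      have h1 : ((i:ℕ):ℝ) + 1 ≤ ((v:ℕ):ℝ) := by exact_mod_cast hgt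
      by_cases hj : j
      · have hj1 : jr = 1 := by simp [hjr, hj]
        simp only [hj]
        rw [eq_comm, decide_eq_true_eq, hj1]
        rcases hgru with h | h <;> rw [h] <;> nlinarith
      · have hj1 : jr = -1 := by simp [hjr, hj]
        simp only [hj]
        rw [eq_comm, decide_eq_false_iff_not, not_le, hj1]
        rcases hgru with h | h <;> rw [h] <;> nlinarith

/-- For all integers d, l ≥ 2, the class of halfspaces W^d over ℝ^d is richer
than both F^l and G^l: there is a map ι : [d]×[l] → ℝ^d such that every F ∈ F^l equals h ∘ ι
for some halfspace h ∈ W^d, and a map ι' : [d]×[l] → ℝ^d such that every G ∈ G^l equals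
h ∘ ι' for some halfspace h ∈ W^d. -/
theorem stmt18 (d l : ℕ) (hd : 2 ≤ d) (hl : 2 ≤ l) :
    (∃ ι : Fin d × Fin l → (Fin d → ℝ),
      ∀ F ∈ Fclass d l, ∃ h ∈ halfspace d, F = h ∘ ι) ∧
    (∃ ι' : Fin d × Fin l → (Fin d → ℝ),
      ∀ G ∈ Gclass d l, ∃ h ∈ halfspace d, G = h ∘ ι') :=
  ⟨stmt18_Fpart d l hd hl, stmt18_Gpart d l hd hl⟩
end
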